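/- arXiv:2602.15415 — 12 statements merged into one kernel-verified Lean document; each statement's English description precedes it below -/
import Mathlib

section
/- Let I ⊆ ℝ be an open interval, H a nonzero real number, and B : I → ℝ³ a smooth nowhere-vanishing map with ⟨B,B⟩ = 0, ⟨B',B'⟩ = H², and H·det(B, B', B'') > 0 at every point of I. Define κ₂ := −⟨B'',B''⟩/(2H³), A := −(κ₂/H)·B + (1/H²)·B'', and C := (1/H)·B'. Then (A,B,C) satisfies the null frame conditions ⟨A,A⟩ = ⟨B,B⟩ = 0, ⟨A,B⟩ = −1, ⟨A,C⟩ = ⟨B,C⟩ = 0, ⟨C,C⟩ = 1, C = A × B, and the Frenet–Serret equations A' = κ₂·C, B' = H·C, C' = H·A + κ₂·B hold on I. -/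
noncomputable section

/-- The Minkowski bilinear form on ℝ³ with signature (−,+,+):
`⟨x,y⟩ = −x₁y₁ + x₂y₂ + x₃y₃`. -/
def ml (x y : Fin 3 → ℝ) : ℝ := -(x 0 * y 0) + x 1 * y 1 + x 2 * y 2

/-- Determinant of the 3×3 matrix with columns `u`, `v`, `w`. -/
def det3 (u v w : Fin 3 → ℝ) : ℝ :=
  u 0 * (v 1 * w 2 - v 2 * w 1) - v 0 * (u 1 * w 2 - u 2 * w 1)
    + w 0 * (u 1 * v 2 - u 2 * v 1)

/-- The Lorentzian cross product on ℝ³: the unique vector with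
`ml (lcross u v) w = det3 u v w` for all `w`. -/
def lcross (u v : Fin 3 → ℝ) : Fin 3 → ℝ :=
  ![-(u 1 * v 2 - u 2 * v 1), u 2 * v 0 - u 0 * v 2, u 0 * v 1 - u 1 * v 0]

lemma ml_lcross (u v w : Fin 3 → ℝ) : ml (lcross u v) w = det3 u v w := by
  simp [ml, lcross, det3]; ring

lemma ml_lcross_self (u v : Fin 3 → ℝ) :
    ml (lcross u v) (lcross u v) = (ml u v) ^ 2 - ml u u * ml v v := by
  simp [ml, lcross]; ring

lemma ml_comm (u v : Fin 3 → ℝ) : ml u v = ml v u := by simp [ml]; ring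

lemma det3_cyclic (u v w : Fin 3 → ℝ) : det3 u v w = det3 w u v := by
  simp [det3]; ring

lemma det3_right_eq (u v : Fin 3 → ℝ) : det3 u v v = 0 := by simp only [det3]; ring
lemma det3_fs (u w : Fin 3 → ℝ) : det3 u u w = 0 := by simp only [det3]; ring
lemma det3_outer (u v : Fin 3 → ℝ) : det3 u v u = 0 := by simp only [det3]; ring

lemma det3_addl (u u' v w : Fin 3 → ℝ) : det3 (u + u') v w = det3 u v w + det3 u' v w := by
  simp [det3, Pi.add_apply]; ring
lemma det3_smull (a : ℝ) (u v w : Fin 3 → ℝ) : det3 (a • u) v w = a * det3 u v w := by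
  simp [det3, Pi.smul_apply, smul_eq_mul]; ring

lemma ml_addl (u v w : Fin 3 → ℝ) : ml (u + v) w = ml u w + ml v w := by
  simp [ml, Pi.add_apply]; ring
lemma ml_addr (u v w : Fin 3 → ℝ) : ml u (v + w) = ml u v + ml u w := by
  simp [ml, Pi.add_apply]; ring
lemma ml_subl (u v w : Fin 3 → ℝ) : ml (u - v) w = ml u w - ml v w := by
  simp [ml, Pi.sub_apply]; ring
lemma ml_smull (a : ℝ) (u v : Fin 3 → ℝ) : ml (a • u) v = a * ml u v := by
  simp [ml, Pi.smul_apply, smul_eq_mul]; ring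
lemma ml_smulr (a : ℝ) (u v : Fin 3 → ℝ) : ml u (a • v) = a * ml u v := by
  simp [ml, Pi.smul_apply, smul_eq_mul]; ring

/-- If `y` is `ml`-orthogonal to a basis, it vanishes. -/
lemma vanish (u v w y : Fin 3 → ℝ) (hd : det3 u v w ≠ 0)
    (h1 : ml y u = 0) (h2 : ml y v = 0) (h3 : ml y w = 0) : y = 0 := by
  simp only [ml] at h1 h2 h3
  funext i
  have e0 : y 0 * det3 u v w = 0 := by
    simp only [det3]
    linear_combination (-(v 1 * w 2 - v 2 * w 1)) * h1 + (u 1 * w 2 - u 2 * w 1) * h2 +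
      (-(u 1 * v 2 - u 2 * v 1)) * h3
  have e1 : y 1 * det3 u v w = 0 := by
    simp only [det3]
    linear_combination (-(v 0 * w 2 - v 2 * w 0)) * h1 + (u 0 * w 2 - u 2 * w 0) * h2 +
      (-(u 0 * v 2 - u 2 * v 0)) * h3
  have e2 : y 2 * det3 u v w = 0 := by
    simp only [det3]
    linear_combination (v 0 * w 1 - v 1 * w 0) * h1 + (-(u 0 * w 1 - u 1 * w 0)) * h2 +
      (u 0 * v 1 - u 1 * v 0) * h3
  fin_cases i
  · simpa [hd] using mul_eq_zero.1 e0
  · simpa [hd] using mul_eq_zero.1 e1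
  · simpa [hd] using mul_eq_zero.1 e2

/-- Product rule for `ml`. -/
lemma hasDerivAt_ml {f g : ℝ → Fin 3 → ℝ} {f' g' : Fin 3 → ℝ} {s : ℝ}
    (hf : HasDerivAt f f' s) (hg : HasDerivAt g g' s) :
    HasDerivAt (fun t => ml (f t) (g t)) (ml f' (g s) + ml (f s) g') s := by
  have hf' := hasDerivAt_pi.1 hf
  have hg' := hasDerivAt_pi.1 hg
  have h : HasDerivAt (fun t => -(f t 0 * g t 0) + f t 1 * g t 1 + f t 2 * g t 2)
      (-(f' 0 * g s 0 + f s 0 * g' 0) + (f' 1 * g s 1 + f s 1 * g' 1)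
        + (f' 2 * g s 2 + f s 2 * g' 2)) s :=
    ((((hf' 0).mul (hg' 0)).neg.add ((hf' 1).mul (hg' 1))).add ((hf' 2).mul (hg' 2)))
  convert h using 1 <;> simp only [ml, Pi.add_apply] <;> ring


/-- converse construction of a null frame satisfying the
B-scroll Frenet–Serret equations from a lightlike vector field `B`. -/
theorem stmt1
    (I : Set ℝ) (hIopen : IsOpen I) (hIconn : I.OrdConnected)
    (H : ℝ) (hH : H ≠ 0)
    (B : ℝ → Fin 3 → ℝ)
    (hBsm : ContDiffOn ℝ (⊤ : ℕ∞) B I)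
    (hBne : ∀ s ∈ I, B s ≠ 0)
    (hBB : ∀ s ∈ I, ml (B s) (B s) = 0)
    (hB'B' : ∀ s ∈ I, ml (deriv B s) (deriv B s) = H ^ 2)
    (hdet : ∀ s ∈ I, 0 < H * det3 (B s) (deriv B s) (deriv (deriv B) s))
    (κ₂ : ℝ → ℝ) (A C : ℝ → Fin 3 → ℝ)
    (hκdef : ∀ s, κ₂ s = -(ml (deriv (deriv B) s) (deriv (deriv B) s)) / (2 * H ^ 3))
    (hAdef : ∀ s, A s = (-(κ₂ s / H)) • B s + (1 / H ^ 2) • deriv (deriv B) s)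
    (hCdef : ∀ s, C s = (1 / H) • deriv B s) :
    ∀ s ∈ I,
      ml (A s) (A s) = 0 ∧
      ml (B s) (B s) = 0 ∧
      ml (A s) (B s) = -1 ∧
      ml (A s) (C s) = 0 ∧
      ml (B s) (C s) = 0 ∧
      ml (C s) (C s) = 1 ∧
      C s = lcross (A s) (B s) ∧
      deriv A s = κ₂ s • C s ∧
      deriv B s = H • C s ∧
      deriv C s = H • A s + κ₂ s • B s := by
  -- smoothness of derivatives
  have hB1sm : ContDiffOn ℝ (⊤ : ℕ∞) (deriv B) I := hBsm.deriv_of_isOpen hIopen (by exact_mod_cast le_top)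
  have hB2sm : ContDiffOn ℝ (⊤ : ℕ∞) (deriv (deriv B)) I := hB1sm.deriv_of_isOpen hIopen (by exact_mod_cast le_top)
  have hB : ∀ t ∈ I, HasDerivAt B (deriv B t) t := fun t ht =>
    ((hBsm.contDiffAt (hIopen.mem_nhds ht)).differentiableAt (by simp)).hasDerivAt
  have hB' : ∀ t ∈ I, HasDerivAt (deriv B) (deriv (deriv B) t) t := fun t ht =>
    ((hB1sm.contDiffAt (hIopen.mem_nhds ht)).differentiableAt (by simp)).hasDerivAt
  have hB'' : ∀ t ∈ I, HasDerivAt (deriv (deriv B)) (deriv (deriv (deriv B)) t) t := fun t ht =>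
    ((hB2sm.contDiffAt (hIopen.mem_nhds ht)).differentiableAt (by simp)).hasDerivAt
  -- ⟨B,B'⟩ = 0 on I
  have P1 : ∀ t ∈ I, ml (B t) (deriv B t) = 0 := by
    intro t ht
    have hev : (fun r => ml (B r) (B r)) =ᶠ[nhds t] (fun _ => (0 : ℝ)) := by
      filter_upwards [hIopen.mem_nhds ht] with r hr using hBB r hr
    have h1 := (hasDerivAt_ml (hB t ht) (hB t ht)).deriv
    rw [hev.deriv_eq, deriv_const] at h1
    have h2 := ml_comm (deriv B t) (B t)
    linarith [h1, h2]
  -- ⟨B,B''⟩ = -H² on I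
  have P2 : ∀ t ∈ I, ml (B t) (deriv (deriv B) t) = -H ^ 2 := by
    intro t ht
    have hev : (fun r => ml (B r) (deriv B r)) =ᶠ[nhds t] (fun _ => (0 : ℝ)) := by
      filter_upwards [hIopen.mem_nhds ht] with r hr using P1 r hr
    have h1 := (hasDerivAt_ml (hB t ht) (hB' t ht)).deriv
    rw [hev.deriv_eq, deriv_const] at h1
    rw [hB'B' t ht] at h1
    linarith [h1]
  -- ⟨B',B''⟩ = 0 on I
  have P3 : ∀ t ∈ I, ml (deriv B t) (deriv (deriv B) t) = 0 := by
    intro t ht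
    have hev : (fun r => ml (deriv B r) (deriv B r)) =ᶠ[nhds t] (fun _ => H ^ 2) := by
      filter_upwards [hIopen.mem_nhds ht] with r hr using hB'B' r hr
    have h1 := (hasDerivAt_ml (hB' t ht) (hB' t ht)).deriv
    rw [hev.deriv_eq, deriv_const] at h1
    have h2 := ml_comm (deriv (deriv B) t) (deriv B t)
    linarith [h1, h2]
  intro s hs
  have hH2 : H ^ 2 ≠ 0 := pow_ne_zero _ hH
  have hH3 : H ^ 3 ≠ 0 := pow_ne_zero _ hH
  -- basic scalar products at s
  have e00 : ml (B s) (B s) = 0 := hBB s hs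
  have e01 : ml (B s) (deriv B s) = 0 := P1 s hs
  have e10 : ml (deriv B s) (B s) = 0 := by rw [ml_comm]; exact e01
  have e02 : ml (B s) (deriv (deriv B) s) = -H ^ 2 := P2 s hs
  have e20 : ml (deriv (deriv B) s) (B s) = -H ^ 2 := by rw [ml_comm]; exact e02
  have e11 : ml (deriv B s) (deriv B s) = H ^ 2 := hB'B' s hs
  have e12 : ml (deriv B s) (deriv (deriv B) s) = 0 := P3 s hs
  have e21 : ml (deriv (deriv B) s) (deriv B s) = 0 := by rw [ml_comm]; exact e12
  have e22 : ml (deriv (deriv B) s) (deriv (deriv B) s) = -(2 * H ^ 3 * κ₂ s) := by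
    have h := hκdef s
    have h2H3 : (2 : ℝ) * H ^ 3 ≠ 0 := by positivity
    field_simp at h
    linarith [h]
  -- ⟨B,B'''⟩ = 0 at s
  have Q2 : ml (B s) (deriv (deriv (deriv B)) s) = 0 := by
    have hev : (fun r => ml (B r) (deriv (deriv B) r)) =ᶠ[nhds s] (fun _ => (-H ^ 2 : ℝ)) := by
      filter_upwards [hIopen.mem_nhds hs] with r hr using P2 r hr
    have h1 := (hasDerivAt_ml (hB s hs) (hB'' s hs)).deriv
    rw [hev.deriv_eq, deriv_const] at h1
    linarith [h1, e12]
  -- ⟨B',B'''⟩ = 2H³κ₂ at s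
  have Q3 : ml (deriv B s) (deriv (deriv (deriv B)) s) = 2 * H ^ 3 * κ₂ s := by
    have hev : (fun r => ml (deriv B r) (deriv (deriv B) r)) =ᶠ[nhds s] (fun _ => (0 : ℝ)) := by
      filter_upwards [hIopen.mem_nhds hs] with r hr using P3 r hr
    have h1 := (hasDerivAt_ml (hB' s hs) (hB'' s hs)).deriv
    rw [hev.deriv_eq, deriv_const] at h1
    linarith [h1, e22]
  -- derivative of κ₂ at s
  have hκfun : κ₂ = fun t => -(ml (deriv (deriv B) t) (deriv (deriv B) t)) / (2 * H ^ 3) :=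
    funext hκdef
  have hκs : HasDerivAt κ₂
      (-(ml (deriv (deriv (deriv B)) s) (deriv (deriv B) s)
        + ml (deriv (deriv B) s) (deriv (deriv (deriv B)) s)) / (2 * H ^ 3)) s := by
    rw [hκfun]
    exact ((hasDerivAt_ml (hB'' s hs) (hB'' s hs)).neg).div_const _
  -- ⟨B'',B'''⟩ = -H³ · κ₂' at s
  have Qk : ml (deriv (deriv B) s) (deriv (deriv (deriv B)) s) = -(H ^ 3) * deriv κ₂ s := by
    have h1 := hκs.deriv
    rw [ml_comm (deriv (deriv (deriv B)) s)] at h1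
    have h2H3 : (2 : ℝ) * H ^ 3 ≠ 0 := by positivity
    field_simp at h1
    linarith [h1]
  -- the determinant
  set d := det3 (B s) (deriv B s) (deriv (deriv B) s) with hd_def
  have hdpos : 0 < H * d := by rw [hd_def]; exact hdet s hs
  have hdne : d ≠ 0 := by
    intro h; rw [h, mul_zero] at hdpos; exact lt_irrefl 0 hdpos
  -- B'' × B = (d/H²) • B'
  have hx : lcross (deriv (deriv B) s) (B s) = (d / H ^ 2) • deriv B s := by
    have hy : lcross (deriv (deriv B) s) (B s) - (d / H ^ 2) • deriv B s = 0 := by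
      apply vanish (B s) (deriv B s) (deriv (deriv B) s) _ hdne
      · rw [ml_subl, ml_lcross, det3_right_eq, ml_smull, e10]; ring
      · rw [ml_subl, ml_lcross, ml_smull, e11]
        rw [det3_cyclic (deriv (deriv B) s), det3_cyclic (deriv B s), ← hd_def]
        field_simp; ring
      · rw [ml_subl, ml_lcross, det3_outer, ml_smull, e12]; ring
    exact sub_eq_zero.1 hy
  -- d = H³
  have hd2 : d ^ 2 = H ^ 6 := by
    have h1 := ml_lcross_self (deriv (deriv B) s) (B s)
    rw [hx, ml_smulr, ml_smull, e11, e20, e00] at h1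
    have : d / H ^ 2 * (d / H ^ 2 * H ^ 2) = d ^ 2 / H ^ 2 := by field_simp
    rw [this] at h1
    field_simp at h1
    linarith [h1]
  have hd3 : d = H ^ 3 := by
    have h4 : (0:ℝ) < H ^ 4 := by positivity
    rcases mul_eq_zero.1 (show (d - H ^ 3) * (d + H ^ 3) = 0 by nlinarith [hd2]) with h | h
    · linarith
    · exfalso
      have hd' : d = -H ^ 3 := by linarith
      rw [hd'] at hdpos
      nlinarith [h4]
  -- B''' = (H κ₂') B + (2 H κ₂) B'
  have K : deriv (deriv (deriv B)) s
      = (H * deriv κ₂ s) • B s + (2 * H * κ₂ s) • deriv B s := by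
    have hy : deriv (deriv (deriv B)) s
        - ((H * deriv κ₂ s) • B s + (2 * H * κ₂ s) • deriv B s) = 0 := by
      apply vanish (B s) (deriv B s) (deriv (deriv B) s) _ hdne
      · rw [ml_subl, ml_addl, ml_smull, ml_smull, e00, e10, ml_comm, Q2]; ring
      · rw [ml_subl, ml_addl, ml_smull, ml_smull, e01, e11, ml_comm, Q3]; ring
      · rw [ml_subl, ml_addl, ml_smull, ml_smull, e02, e12, ml_comm, Qk]; ring
    have := sub_eq_zero.1 hy
    exact this
  refine ⟨?_, e00, ?_, ?_, ?_, ?_, ?_, ?_, ?_, ?_⟩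
  · simp only [hAdef s, ml_addl, ml_addr, ml_smull, ml_smulr, e00, e02, e20, e22]
    field_simp
    ring
  · simp only [hAdef s, ml_addl, ml_smull, e00, e20]
    field_simp
    ring
  · simp only [hAdef s, hCdef s, ml_addl, ml_smull, ml_smulr, e01, e21]
    ring
  · simp only [hCdef s, ml_smulr, e01]; ring
  · simp only [hCdef s, ml_smull, ml_smulr, e11]
    field_simp
  · -- C = A × B
    have hy : lcross (A s) (B s) - C s = 0 := by
      apply vanish (B s) (deriv B s) (deriv (deriv B) s) _ hdne
      · rw [ml_subl, ml_lcross, det3_right_eq, hCdef s, ml_smull, e10]; ring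
      · rw [ml_subl, ml_lcross, hAdef s, det3_addl, det3_smull, det3_smull, det3_fs,
          hCdef s, ml_smull, e11, det3_cyclic (deriv (deriv B) s), det3_cyclic (deriv B s),
          ← hd_def, hd3]
        field_simp; ring
      · rw [ml_subl, ml_lcross, hAdef s, det3_addl, det3_smull, det3_smull, det3_fs,
          det3_outer, hCdef s, ml_smull, e12]; ring
    exact (sub_eq_zero.1 hy).symm
  · -- A' = κ₂ C
    have hκs' : HasDerivAt κ₂ (deriv κ₂ s) s := hκs.differentiableAt.hasDerivAt
    have hAfun : A = fun t => (-(κ₂ t / H)) • B t + (1 / H ^ 2) • deriv (deriv B) t :=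
      funext hAdef
    have hA' : HasDerivAt A
        ((-(deriv κ₂ s / H)) • B s + (-(κ₂ s / H)) • deriv B s
          + (1 / H ^ 2) • deriv (deriv (deriv B)) s) s := by
      rw [hAfun]
      have h1 : HasDerivAt (fun t => (-(κ₂ t / H))) (-(deriv κ₂ s / H)) s :=
        (hκs'.div_const H).neg
      have h2 := h1.smul (hB s hs)
      have h3 := (hB'' s hs).const_smul (1 / H ^ 2)
      exact (h2.add h3).congr_deriv (by abel)
    rw [hA'.deriv, K, hCdef s]
    funext i
    simp only [Pi.add_apply, Pi.smul_apply, smul_eq_mul]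
    field_simp; ring
  · rw [hCdef s, smul_smul, mul_one_div, div_self hH, one_smul]
  · have hCfun : C = fun t => (1 / H) • deriv B t := funext hCdef
    rw [hCfun, deriv_fun_const_smul _ ((hB' s hs).differentiableAt), hAdef s]
    funext i
    simp only [Pi.add_apply, Pi.smul_apply, smul_eq_mul]
    field_simp; ring
end
end

section
/- Let I ⊆ ℝ be an open interval and γ = (γ₁,γ₂,γ₃) : I → ℝ³ a smooth regular curve (γ' nowhere zero) with ⟨γ',γ'⟩ = 0 and γ₁'(s) ≠ γ₂'(s) for all s ∈ I. Then there exist a smooth function h : I → ℝ and a nowhere-vanishing smooth function ω̂ : I → ℝ such that γ'(s) = (ω̂(s)/2)·(−1 − h(s)², 1 − h(s)², 2h(s)) for all s ∈ I. -/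
noncomputable section

/-- Weierstrass-like representation of a regular null curve with
`γ₁' ≠ γ₂'`: there exist `h` and a nowhere-vanishing `ω̂` with
`γ' = (ω̂/2)(−1−h², 1−h², 2h)`. -/
theorem stmt4
    (I : Set ℝ) (hIopen : IsOpen I) (hIconn : I.OrdConnected)
    (γ : ℝ → Fin 3 → ℝ)
    (hγsm : ContDiffOn ℝ (⊤ : ℕ∞) γ I)
    (hreg : ∀ s ∈ I, deriv γ s ≠ 0)
    (hnull : ∀ s ∈ I, ml (deriv γ s) (deriv γ s) = 0)
    (h12 : ∀ s ∈ I, deriv γ s 0 ≠ deriv γ s 1) :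
    ∃ h ω : ℝ → ℝ,
      ContDiffOn ℝ (⊤ : ℕ∞) h I ∧ ContDiffOn ℝ (⊤ : ℕ∞) ω I ∧
      (∀ s ∈ I, ω s ≠ 0) ∧
      ∀ s ∈ I, deriv γ s =
        (ω s / 2) • ![-1 - h s ^ 2, 1 - h s ^ 2, 2 * h s] := by
  have hd : ContDiffOn ℝ (⊤ : ℕ∞) (deriv γ) I :=
    hγsm.deriv_of_isOpen hIopen (by exact_mod_cast le_top)
  have hcomp : ∀ i : Fin 3, ContDiffOn ℝ (⊤ : ℕ∞) (fun s => deriv γ s i) I := by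
    intro i
    exact (ContDiff.comp (contDiff_apply ℝ ℝ i) contDiff_id).comp_contDiffOn hd
  set ω : ℝ → ℝ := fun s => deriv γ s 1 - deriv γ s 0 with hω
  have hωsm : ContDiffOn ℝ (⊤ : ℕ∞) ω I := (hcomp 1).sub (hcomp 0)
  have hωne : ∀ s ∈ I, ω s ≠ 0 := fun s hs => sub_ne_zero.2 (Ne.symm (h12 s hs))
  set h : ℝ → ℝ := fun s => deriv γ s 2 / ω s with hh
  have hhsm : ContDiffOn ℝ (⊤ : ℕ∞) h I := (hcomp 2).div hωsm hωne
  refine ⟨h, ω, hhsm, hωsm, hωne, ?_⟩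
  intro s hs
  have hn := hnull s hs
  have hne : deriv γ s 1 - deriv γ s 0 ≠ 0 := hωne s hs
  unfold ml at hn
  funext i
  have hωd : ω s = deriv γ s 1 - deriv γ s 0 := rfl
  have hhd : h s = deriv γ s 2 / ω s := rfl
  fin_cases i
  · show deriv γ s 0 = ω s / 2 * (-1 - h s ^ 2)
    rw [hhd, hωd]; field_simp
    linear_combination hn
  · show deriv γ s 1 = ω s / 2 * (1 - h s ^ 2)
    rw [hhd, hωd]; field_simp
    linear_combination hn
  · show deriv γ s 2 = ω s / 2 * (2 * h s)
    rw [hhd, hωd]; field_simp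
end
end

section
/- Let I ⊆ ℝ be an open interval, H a nonzero real number, and h : I → ℝ a smooth function with h'(s) ≠ 0 for all s ∈ I. Let γ : I → ℝ³ be any smooth curve satisfying γ'(s) = (H/(2h'(s)))·(−1 − h(s)², 1 − h(s)², 2h(s)). Then γ is a regular null curve, ⟨γ'',γ''⟩ = H² on I, γ'(s) and γ''(s) are linearly independent for every s ∈ I, and ⟨γ''',γ'''⟩ = 2H²·S(h) on I, where S(h) is the Schwarzian derivative of h. -/
set_option maxHeartbeats 1000000


noncomputable section

/-- the curve with `γ' = (H/(2h'))(−1−h², 1−h², 2h)` is a regular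
non-degenerate null curve with `⟨γ'',γ''⟩ = H²` and
`⟨γ''',γ'''⟩ = 2H²·S(h)`, where `S(h)` is the Schwarzian derivative. -/
theorem stmt5
    (I : Set ℝ) (hIopen : IsOpen I) (hIconn : I.OrdConnected)
    (H : ℝ) (hH : H ≠ 0)
    (h : ℝ → ℝ) (hhsm : ContDiffOn ℝ (⊤ : ℕ∞) h I)
    (hh' : ∀ s ∈ I, deriv h s ≠ 0)
    (γ : ℝ → Fin 3 → ℝ)
    (hγsm : ContDiffOn ℝ (⊤ : ℕ∞) γ I)
    (hγ' : ∀ s ∈ I, deriv γ s =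
      (H / (2 * deriv h s)) • ![-1 - h s ^ 2, 1 - h s ^ 2, 2 * h s])
    (Sh : ℝ → ℝ)
    (hShdef : ∀ s, Sh s = deriv (deriv (deriv h)) s / deriv h s
      - (3 / 2) * (deriv (deriv h) s / deriv h s) ^ 2) :
    ∀ s ∈ I,
      deriv γ s ≠ 0 ∧
      ml (deriv γ s) (deriv γ s) = 0 ∧
      ml (deriv (deriv γ) s) (deriv (deriv γ) s) = H ^ 2 ∧
      LinearIndependent ℝ ![deriv γ s, deriv (deriv γ) s] ∧
      ml (deriv (deriv (deriv γ)) s) (deriv (deriv (deriv γ)) s)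
        = 2 * H ^ 2 * Sh s := by
  set B := deriv h with hB
  set C := deriv B with hC
  set D := deriv C with hD
  have hBsm : ContDiffOn ℝ (⊤ : ℕ∞) B I := hhsm.deriv_of_isOpen hIopen (by simp)
  have hCsm : ContDiffOn ℝ (⊤ : ℕ∞) C I := hBsm.deriv_of_isOpen hIopen (by simp)
  -- HasDerivAt facts at points of I
  have hhd : ∀ t ∈ I, HasDerivAt h (B t) t := fun t ht =>
    ((hhsm.contDiffAt (hIopen.mem_nhds ht)).differentiableAt (by simp)).hasDerivAt
  have hBd : ∀ t ∈ I, HasDerivAt B (C t) t := fun t ht =>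
    ((hBsm.contDiffAt (hIopen.mem_nhds ht)).differentiableAt (by simp)).hasDerivAt
  have hCd : ∀ t ∈ I, HasDerivAt C (D t) t := fun t ht =>
    ((hCsm.contDiffAt (hIopen.mem_nhds ht)).differentiableAt (by simp)).hasDerivAt
  -- explicit first derivative
  set f : ℝ → Fin 3 → ℝ := fun t =>
    (H / (2 * B t)) • ![-1 - h t ^ 2, 1 - h t ^ 2, 2 * h t] with hf
  -- explicit second derivative
  set F2 : ℝ → Fin 3 → ℝ := fun t =>
    ![-(H * h t) + H * (1 + h t ^ 2) * C t / (2 * B t ^ 2),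
      -(H * h t) - H * (1 - h t ^ 2) * C t / (2 * B t ^ 2),
      H - H * h t * C t / B t ^ 2] with hF2
  -- explicit third derivative
  set F3 : ℝ → Fin 3 → ℝ := fun t =>
    ![-(H * B t) + H * ((2 * h t * B t * C t + (1 + h t ^ 2) * D t) / (2 * B t ^ 2)
        - (1 + h t ^ 2) * C t ^ 2 / B t ^ 3),
      -(H * B t) - H * ((-(2 * h t * B t * C t) + (1 - h t ^ 2) * D t) / (2 * B t ^ 2)
        - (1 - h t ^ 2) * C t ^ 2 / B t ^ 3),
      -(H * ((B t * C t + h t * D t) / B t ^ 2 - 2 * h t * C t ^ 2 / B t ^ 3))] with hF3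
  have hfd : ∀ t ∈ I, HasDerivAt f (F2 t) t := by
    intro t ht
    have hb := hh' t ht
    have h2b : (2 : ℝ) * B t ≠ 0 := by positivity
    have hA := hhd t ht
    have hBt := hBd t ht
    rw [hasDerivAt_pi]
    intro i
    have hden : HasDerivAt (fun u => H / (2 * B u)) (-(H * (2 * C t)) / (2 * B t) ^ 2) t := by
      exact ((hasDerivAt_const t H).div (hBt.const_mul 2) h2b).congr_deriv (by ring)
    fin_cases i
    · have h1 : HasDerivAt (fun u => -1 - h u ^ 2) (0 - 2 * h t ^ 1 * B t) t :=
        (hasDerivAt_const t (-1 : ℝ)).sub (hA.pow 2)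
      have := hden.mul h1
      simp only [hf, hF2, Pi.smul_apply, smul_eq_mul, Fin.zero_eta, Fin.mk_one, Fin.reduceFinMk, Matrix.cons_val_zero]
      refine this.congr_deriv ?_
      field_simp
      ring
    · have h1 : HasDerivAt (fun u => 1 - h u ^ 2) (0 - 2 * h t ^ 1 * B t) t :=
        (hasDerivAt_const t (1 : ℝ)).sub (hA.pow 2)
      have := hden.mul h1
      simp only [hf, hF2, Pi.smul_apply, smul_eq_mul, Fin.zero_eta, Fin.mk_one, Fin.reduceFinMk, Matrix.cons_val_one, Matrix.cons_val_zero, Matrix.head_cons]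
      refine this.congr_deriv ?_
      field_simp
      ring
    · have h1 : HasDerivAt (fun u => 2 * h u) (2 * B t) t := hA.const_mul 2
      have := hden.mul h1
      simp only [hf, hF2, Pi.smul_apply, smul_eq_mul, Fin.zero_eta, Fin.mk_one, Fin.reduceFinMk, Matrix.cons_val_two, Matrix.tail_cons,
        Matrix.head_cons]
      refine this.congr_deriv ?_
      field_simp
      ring
  have hF2d : ∀ t ∈ I, HasDerivAt F2 (F3 t) t := by
    intro t ht
    have hb := hh' t ht
    have h2b2 : (2 : ℝ) * B t ^ 2 ≠ 0 := by positivity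
    have hb2 : B t ^ 2 ≠ 0 := pow_ne_zero 2 hb
    have hA := hhd t ht
    have hBt := hBd t ht
    have hCt := hCd t ht
    have hden2 : HasDerivAt (fun u => (2 : ℝ) * B u ^ 2) (2 * (2 * B t ^ 1 * C t)) t :=
      (hBt.pow 2).const_mul 2
    have hden1 : HasDerivAt (fun u => B u ^ 2) (2 * B t ^ 1 * C t) t := hBt.pow 2
    rw [hasDerivAt_pi]
    intro i
    fin_cases i
    · have hn : HasDerivAt (fun u => H * (1 + h u ^ 2) * C u)
          ((H * (0 + 2 * h t ^ 1 * B t)) * C t + H * (1 + h t ^ 2) * D t) t :=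
        (((hasDerivAt_const t (1 : ℝ)).add (hA.pow 2)).const_mul H).mul hCt
      have := ((hA.const_mul H).neg).add (hn.div hden2 h2b2)
      simp only [hF2, hF3, Fin.zero_eta, Fin.mk_one, Fin.reduceFinMk, Matrix.cons_val_zero]
      refine this.congr_deriv ?_
      field_simp
      ring
    · have hn : HasDerivAt (fun u => H * (1 - h u ^ 2) * C u)
          ((H * (0 - 2 * h t ^ 1 * B t)) * C t + H * (1 - h t ^ 2) * D t) t :=
        (((hasDerivAt_const t (1 : ℝ)).sub (hA.pow 2)).const_mul H).mul hCt
      have := ((hA.const_mul H).neg).sub (hn.div hden2 h2b2)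
      simp only [hF2, hF3, Fin.zero_eta, Fin.mk_one, Fin.reduceFinMk, Matrix.cons_val_one, Matrix.cons_val_zero, Matrix.head_cons]
      refine this.congr_deriv ?_
      field_simp
      ring
    · have hn : HasDerivAt (fun u => H * h u * C u)
          ((H * B t) * C t + H * h t * D t) t := ((hA.const_mul H).mul hCt)
      have := (hasDerivAt_const t H).sub (hn.div hden1 hb2)
      simp only [hF2, hF3, Fin.zero_eta, Fin.mk_one, Fin.reduceFinMk, Matrix.cons_val_two, Matrix.tail_cons, Matrix.head_cons]
      refine this.congr_deriv ?_
      field_simp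
      ring
  -- derivatives of γ on I
  have hd2 : ∀ t ∈ I, deriv (deriv γ) t = F2 t := by
    intro t ht
    have heq : deriv γ =ᶠ[nhds t] f :=
      Filter.eventually_of_mem (hIopen.mem_nhds ht) (fun u hu => hγ' u hu)
    rw [heq.deriv_eq, (hfd t ht).deriv]
  have hd3 : ∀ t ∈ I, deriv (deriv (deriv γ)) t = F3 t := by
    intro t ht
    have heq : deriv (deriv γ) =ᶠ[nhds t] F2 :=
      Filter.eventually_of_mem (hIopen.mem_nhds ht) (fun u hu => hd2 u hu)
    rw [heq.deriv_eq, (hF2d t ht).deriv]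
  intro s hs
  have hb := hh' s hs
  have h2b : (2 : ℝ) * B s ≠ 0 := by positivity
  have hne : deriv γ s ≠ 0 := by
    intro h0
    rw [hγ' s hs] at h0
    have := congrFun h0 0
    simp only [Pi.smul_apply, Matrix.cons_val_zero, smul_eq_mul, Pi.zero_apply] at this
    have h1 : H / (2 * B s) ≠ 0 := div_ne_zero hH h2b
    have h2 : -1 - h s ^ 2 ≠ 0 := by nlinarith [sq_nonneg (h s)]
    exact (mul_ne_zero h1 h2) this
  have hml1 : ml (deriv γ s) (deriv γ s) = 0 := by
    rw [hγ' s hs]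
    simp only [ml, Pi.smul_apply, Matrix.cons_val_zero, Matrix.cons_val_one, Matrix.head_cons,
      Matrix.cons_val_two, Matrix.tail_cons, smul_eq_mul]
    ring
  have hml2 : ml (deriv (deriv γ) s) (deriv (deriv γ) s) = H ^ 2 := by
    rw [hd2 s hs]
    simp only [ml, hF2, Matrix.cons_val_zero, Matrix.cons_val_one, Matrix.head_cons,
      Matrix.cons_val_two, Matrix.tail_cons]
    field_simp
    ring
  refine ⟨hne, hml1, hml2, ?_, ?_⟩
  · rw [linearIndependent_fin2]
    constructor
    · show deriv (deriv γ) s ≠ 0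
      intro h0
      rw [h0] at hml2
      simp only [ml, Pi.zero_apply] at hml2
      exact pow_ne_zero 2 hH (by linarith)
    · show ∀ a : ℝ, a • deriv (deriv γ) s ≠ deriv γ s
      intro a heq
      have hsq : ml (a • deriv (deriv γ) s) (a • deriv (deriv γ) s)
          = a ^ 2 * ml (deriv (deriv γ) s) (deriv (deriv γ) s) := by
        simp only [ml, Pi.smul_apply, smul_eq_mul]; ring
      rw [heq, hml1, hml2] at hsq
      have ha : a = 0 := by
        have := hsq.symm
        have h2 : a ^ 2 = 0 := by
          rcases mul_eq_zero.mp this with h' | h'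
          · exact h'
          · exact absurd h' (pow_ne_zero 2 hH)
        exact pow_eq_zero_iff (n := 2) (by norm_num) |>.mp h2
      rw [ha, zero_smul] at heq
      exact hne heq.symm
  · rw [hd3 s hs, hShdef s]
    show ml (F3 s) (F3 s) = 2 * H ^ 2 * (D s / B s - 3 / 2 * (C s / B s) ^ 2)
    simp only [ml, hF3, Matrix.cons_val_zero, Matrix.cons_val_one, Matrix.head_cons,
      Matrix.cons_val_two, Matrix.tail_cons]
    field_simp
    ring
end
end

section
/- Let I ⊆ ℝ be an open interval, H a nonzero real number, and κ : I → ℝ a smooth function. Then there exists a smooth curve γ : I → ℝ³ such that ⟨γ',γ'⟩ = 0, ⟨γ'',γ''⟩ = H², and ⟨γ''',γ'''⟩ = 2H³·κ hold on all of I. -/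
noncomputable section

open scoped ContDiff
open Set MeasureTheory intervalIntegral Filter

namespace Stmt6Aux


variable {I : Set ℝ}

lemma ftc (hIo : IsOpen I) (hIc : I.OrdConnected) {s₀ : ℝ} (hs₀ : s₀ ∈ I)
    {g : ℝ → ℝ} (hg : ContinuousOn g I) {s : ℝ} (hs : s ∈ I) :
    HasDerivAt (fun x => ∫ t in s₀..x, g t) (g s) s :=
  intervalIntegral.integral_hasDerivAt_right
    ((hg.mono (hIc.uIcc_subset hs₀ hs)).intervalIntegrable)
    (hg.stronglyMeasurableAtFilter hIo s hs)
    (hg.continuousAt (hIo.mem_nhds hs))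

lemma primitive_contOn (hIo : IsOpen I) (hIc : I.OrdConnected) {s₀ : ℝ} (hs₀ : s₀ ∈ I)
    {g : ℝ → ℝ} (hg : ContinuousOn g I) :
    ContinuousOn (fun x => ∫ t in s₀..x, g t) I := fun s hs =>
  ((ftc hIo hIc hs₀ hg hs).continuousAt).continuousWithinAt

lemma contDiffOn_nat_of_hasDerivAt (hIo : IsOpen I) {f g : ℝ → ℝ} {n : ℕ}
    (hd : ∀ s ∈ I, HasDerivAt f (g s) s) (hg : ContDiffOn ℝ n g I) :
    ContDiffOn ℝ (n + 1 : ℕ) f I := by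
  have : ContDiffOn ℝ ((n : WithTop ℕ∞) + 1) f I := by
    rw [contDiffOn_succ_iff_deriv_of_isOpen hIo]
    refine ⟨fun s hs => (hd s hs).differentiableAt.differentiableWithinAt, ?_, ?_⟩
    · intro h; exact absurd h (by simp)
    · exact hg.congr fun s hs => (hd s hs).deriv
  exact_mod_cast this

lemma contDiffOn_top_of_hasDerivAt (hIo : IsOpen I) {f g : ℝ → ℝ}
    (hd : ∀ s ∈ I, HasDerivAt f (g s) s) (hg : ContDiffOn ℝ ∞ g I) :
    ContDiffOn ℝ ∞ f I := by
  rw [contDiffOn_infty_iff_deriv_of_isOpen hIo]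
  exact ⟨fun s hs => (hd s hs).differentiableAt.differentiableWithinAt,
    hg.congr fun s hs => (hd s hs).deriv⟩



variable {I : Set ℝ}

/-- Picard iterates for the second order linear ODE `u'' = q u`. -/
def pic (q : ℝ → ℝ) (s₀ a b : ℝ) : ℕ → ℝ → ℝ
  | 0 => fun s => a + b * (s - s₀)
  | n + 1 => fun s => ∫ t in s₀..s, (s - t) * (q t * pic q s₀ a b n t)

lemma intInt (hIc : I.OrdConnected) {s₀ s : ℝ} (hs₀ : s₀ ∈ I) (hs : s ∈ I)
    {g : ℝ → ℝ} (hg : ContinuousOn g I) : IntervalIntegrable g volume s₀ s :=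
  (hg.mono (hIc.uIcc_subset hs₀ hs)).intervalIntegrable

/-- rewriting the Volterra kernel integral as a combination of plain primitives -/
lemma kernel_eq (hIc : I.OrdConnected) {s₀ : ℝ} (hs₀ : s₀ ∈ I)
    {g : ℝ → ℝ} (hg : ContinuousOn g I) {s : ℝ} (hs : s ∈ I) :
    (∫ t in s₀..s, (s - t) * g t)
      = s * (∫ t in s₀..s, g t) - ∫ t in s₀..s, t * g t := by
  have h1 : IntervalIntegrable g volume s₀ s := intInt hIc hs₀ hs hg
  have h2 : IntervalIntegrable (fun t => t * g t) volume s₀ s :=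
    intInt hIc hs₀ hs (continuousOn_id.mul hg)
  have : (∫ t in s₀..s, (s - t) * g t)
      = ∫ t in s₀..s, (s * g t - t * g t) := by
    apply intervalIntegral.integral_congr; intro t _; ring
  rw [this, intervalIntegral.integral_sub (h1.const_mul s) h2,
    intervalIntegral.integral_const_mul]

lemma pic_contOn (hIo : IsOpen I) (hIc : I.OrdConnected) {s₀ : ℝ} (hs₀ : s₀ ∈ I)
    {q : ℝ → ℝ} (hq : ContinuousOn q I) (a b : ℝ) :
    ∀ n, ContinuousOn (pic q s₀ a b n) I := by
  intro n
  induction n with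
  | zero =>
      exact
        ((continuous_const.add (continuous_const.mul (continuous_id.sub continuous_const)) :
          Continuous fun s => a + b * (s - s₀))).continuousOn
  | succ n ih =>
      have hg : ContinuousOn (fun t => q t * pic q s₀ a b n t) I := hq.mul ih
      have key : ∀ s ∈ I, pic q s₀ a b (n + 1) s
          = s * (∫ t in s₀..s, q t * pic q s₀ a b n t)
            - ∫ t in s₀..s, t * (q t * pic q s₀ a b n t) := by
        intro s hs
        exact kernel_eq hIc hs₀ hg hs
      have hcont : ContinuousOn (fun s => s * (∫ t in s₀..s, q t * pic q s₀ a b n t)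
          - ∫ t in s₀..s, t * (q t * pic q s₀ a b n t)) I := by
        refine ContinuousOn.sub (continuousOn_id.mul ?_) ?_
        · intro s hs
          exact ((ftc hIo hIc hs₀ hg hs).continuousAt).continuousWithinAt
        · intro s hs
          exact ((ftc hIo hIc hs₀ (continuousOn_id.mul hg) hs).continuousAt).continuousWithinAt
      exact hcont.congr key


lemma integral_pow_sub_right (s₀ s : ℝ) (n : ℕ) :
    (∫ t in s₀..s, (t - s₀) ^ n) = (s - s₀) ^ (n + 1) / (n + 1) := by
  rw [intervalIntegral.integral_comp_sub_right (fun x => x ^ n) s₀]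
  simp [integral_pow]

lemma integral_pow_sub_left (s₀ s : ℝ) (n : ℕ) :
    (∫ t in s₀..s, (s₀ - t) ^ n) = -((s₀ - s) ^ (n + 1) / (n + 1)) := by
  rw [intervalIntegral.integral_symm, intervalIntegral.integral_comp_sub_left (fun x => x ^ n) s₀]
  simp [integral_pow]

variable {I : Set ℝ}

lemma pic_bound (hIo : IsOpen I) (hIc : I.OrdConnected) {q : ℝ → ℝ} (hq : ContinuousOn q I)
    {s₀ a b c d : ℝ} (hcd : Icc c d ⊆ I) (hs₀ : s₀ ∈ Icc c d)
    {M : ℝ} (hM : ∀ t ∈ Icc c d, |q t| ≤ M) :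
    ∀ n, ∀ s ∈ Icc c d, |pic q s₀ a b n s|
      ≤ (|a| + |b| * (d - c)) * (M * (d - c)) ^ n * |s - s₀| ^ n / n.factorial := by
  have hdc : 0 ≤ d - c := by have := hs₀.1; have := hs₀.2; linarith
  have hM0 : 0 ≤ M := le_trans (abs_nonneg _) (hM s₀ hs₀)
  set C := |a| + |b| * (d - c) with hC
  have hC0 : 0 ≤ C := by positivity
  set B := M * (d - c) with hB
  have hB0 : 0 ≤ B := by positivity
  intro n
  induction n with
  | zero =>
      intro s hs
      have habs : |s - s₀| ≤ d - c := by
        rw [abs_sub_le_iff]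
        constructor <;> [linarith [hs.1, hs.2, hs₀.1, hs₀.2]; linarith [hs.1, hs.2, hs₀.1, hs₀.2]]
      simp only [pic, pow_zero, Nat.factorial_zero, Nat.cast_one, mul_one, div_one]
      calc |a + b * (s - s₀)| ≤ |a| + |b| * |s - s₀| := by
            refine (abs_add_le _ _).trans ?_; rw [abs_mul]
        _ ≤ C := by
            rw [hC]
            have := mul_le_mul_of_nonneg_left habs (abs_nonneg b)
            linarith
  | succ n ih =>
      intro s hs
      -- the integrand bound constant
      set K := B * (C * B ^ n / n.factorial) with hK
      have hK0 : 0 ≤ K := by positivity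
      have hIccI : Icc c d ⊆ I := hcd
      have hpicc := pic_contOn hIo hIc (hIccI hs₀) hq a b n
      have hbnd : ∀ t ∈ Set.uIoc s₀ s, |(s - t) * (q t * pic q s₀ a b n t)| ≤ K * |t - s₀| ^ n := by
        intro t ht
        have htIcc : t ∈ Icc c d := by
          have h1 : Set.uIcc s₀ s ⊆ Icc c d := by
            rw [Set.uIcc_eq_union]
            refine Set.union_subset (Set.Icc_subset_Icc hs₀.1 hs.2) (Set.Icc_subset_Icc hs.1 hs₀.2)
          exact h1 (Set.uIoc_subset_uIcc (by exact ht))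
        have h1 : |s - t| ≤ d - c := by
          rw [abs_sub_le_iff]
          constructor <;> linarith [hs.1, hs.2, htIcc.1, htIcc.2]
        have h2 : |q t| ≤ M := hM t htIcc
        have h3 : |pic q s₀ a b n t| ≤ C * B ^ n * |t - s₀| ^ n / n.factorial := ih t htIcc
        calc |(s - t) * (q t * pic q s₀ a b n t)|
            = |s - t| * (|q t| * |pic q s₀ a b n t|) := by rw [abs_mul, abs_mul]
          _ ≤ (d - c) * (M * (C * B ^ n * |t - s₀| ^ n / n.factorial)) := by
              refine mul_le_mul h1 (mul_le_mul h2 h3 (abs_nonneg _) hM0) (by positivity) hdc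
          _ = K * |t - s₀| ^ n := by rw [hK, hB]; ring
      rcases le_total s₀ s with hss | hss
      · -- s₀ ≤ s
        have key : |∫ t in s₀..s, (s - t) * (q t * pic q s₀ a b n t)|
            ≤ |∫ t in s₀..s, K * (t - s₀) ^ n| := by
          rw [← Real.norm_eq_abs]
          apply intervalIntegral.norm_integral_le_abs_of_norm_le
          · refine (MeasureTheory.ae_restrict_iff' measurableSet_uIoc).2 (ae_of_all _ ?_)
            intro t ht
            have h2 : |t - s₀| = t - s₀ := by
              rw [Set.uIoc_of_le hss] at ht
              rw [abs_of_nonneg]; linarith [ht.1]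
            rw [Real.norm_eq_abs]
            calc |(s - t) * (q t * pic q s₀ a b n t)| ≤ K * |t - s₀| ^ n := hbnd t ht
              _ = K * (t - s₀) ^ n := by rw [h2]
          · exact ((continuous_const.mul
              ((continuous_id.sub continuous_const).pow n)).intervalIntegrable _ _)
        rw [intervalIntegral.integral_const_mul, integral_pow_sub_right] at key
        have hs' : 0 ≤ s - s₀ := by linarith
        simp only [pic]
        calc |∫ t in s₀..s, (s - t) * (q t * pic q s₀ a b n t)|
            ≤ |K * ((s - s₀) ^ (n + 1) / (n + 1))| := key
          _ = K * ((s - s₀) ^ (n + 1) / (n + 1)) := abs_of_nonneg (by positivity)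
          _ = C * B ^ (n+1) * |s - s₀| ^ (n+1) / (n+1).factorial := by
              rw [abs_of_nonneg hs', hK, Nat.factorial_succ]
              field_simp
              push_cast
              ring
      · -- s ≤ s₀
        have key : |∫ t in s₀..s, (s - t) * (q t * pic q s₀ a b n t)|
            ≤ |∫ t in s₀..s, K * (s₀ - t) ^ n| := by
          rw [← Real.norm_eq_abs]
          apply intervalIntegral.norm_integral_le_abs_of_norm_le
          · refine (MeasureTheory.ae_restrict_iff' measurableSet_uIoc).2 (ae_of_all _ ?_)
            intro t ht
            have h2 : |t - s₀| = s₀ - t := by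
              rw [Set.uIoc_of_ge hss] at ht
              rw [abs_of_nonpos] <;> [ring; linarith [ht.2]]
            rw [Real.norm_eq_abs]
            calc |(s - t) * (q t * pic q s₀ a b n t)| ≤ K * |t - s₀| ^ n := hbnd t ht
              _ = K * (s₀ - t) ^ n := by rw [h2]
          · exact ((continuous_const.mul
              ((continuous_const.sub continuous_id).pow n)).intervalIntegrable _ _)
        rw [intervalIntegral.integral_const_mul, integral_pow_sub_left] at key
        have hs' : 0 ≤ s₀ - s := by linarith
        simp only [pic]
        calc |∫ t in s₀..s, (s - t) * (q t * pic q s₀ a b n t)|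
            ≤ |K * -((s₀ - s) ^ (n + 1) / (n + 1))| := key
          _ = K * ((s₀ - s) ^ (n + 1) / (n + 1)) := by
              rw [abs_mul, abs_of_nonneg hK0, abs_neg, abs_of_nonneg (by positivity)]
          _ = C * B ^ (n+1) * |s - s₀| ^ (n+1) / (n+1).factorial := by
              rw [show |s - s₀| = s₀ - s by rw [abs_sub_comm, abs_of_nonneg hs'],
                hK, Nat.factorial_succ]
              field_simp
              push_cast
              ring


lemma nbhd (hIo : IsOpen I) (hIc : I.OrdConnected) {s₀ s : ℝ} (hs₀ : s₀ ∈ I) (hs : s ∈ I) :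
    ∃ c d, Icc c d ⊆ I ∧ s₀ ∈ Icc c d ∧ s ∈ Ioo c d := by
  obtain ⟨ε, hε, hball⟩ := Metric.isOpen_iff.1 hIo s hs
  have h1 : s - ε/2 ∈ I := hball (by
    simp only [Metric.mem_ball, Real.dist_eq]
    rw [abs_of_nonpos (by linarith)]; linarith)
  have h2 : s + ε/2 ∈ I := hball (by
    simp only [Metric.mem_ball, Real.dist_eq]
    rw [abs_of_nonneg (by linarith)]; linarith)
  refine ⟨min (s - ε/2) s₀, max (s + ε/2) s₀, ?_, ?_, ?_, ?_⟩
  · have hc : min (s - ε/2) s₀ ∈ I := by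
      rcases min_choice (s - ε/2) s₀ with h | h <;> rw [h] <;> assumption
    have hd : max (s + ε/2) s₀ ∈ I := by
      rcases max_choice (s + ε/2) s₀ with h | h <;> rw [h] <;> assumption
    exact hIc.out hc hd
  · exact ⟨min_le_right _ _, le_max_right _ _⟩
  · exact lt_of_le_of_lt (min_le_left _ _) (by linarith)
  · exact lt_of_lt_of_le (by linarith) (le_max_left _ _)

theorem exists_sol (hIo : IsOpen I) (hIc : I.OrdConnected) {s₀ : ℝ} (hs₀ : s₀ ∈ I)
    {q : ℝ → ℝ} (hq : ContDiffOn ℝ ∞ q I) (a b : ℝ) :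
    ∃ u u' : ℝ → ℝ, u s₀ = a ∧ u' s₀ = b ∧ ContDiffOn ℝ ∞ u I ∧ ContDiffOn ℝ ∞ u' I ∧
      (∀ s ∈ I, HasDerivAt u (u' s) s) ∧ (∀ s ∈ I, HasDerivAt u' (q s * u s) s) := by
  have hqc : ContinuousOn q I := hq.continuousOn
  set u : ℝ → ℝ := fun s => ∑' n, pic q s₀ a b n s with hu
  -- Summability
  have summ : ∀ s ∈ I, Summable fun n => pic q s₀ a b n s := by
    intro s hs
    obtain ⟨c, d, hcd, hs₀K, hsK⟩ := nbhd hIo hIc hs₀ hs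
    obtain ⟨M, hM⟩ := isCompact_Icc.exists_bound_of_continuousOn (hqc.mono hcd)
    have hM' : ∀ t ∈ Icc c d, |q t| ≤ M := fun t ht => by
      simpa [Real.norm_eq_abs] using hM t ht
    refine Summable.of_norm_bounded (g := fun n => (|a| + |b| * (d - c)) * ((M * (d - c)) * |s - s₀|) ^ n / n.factorial)
      (by simpa [mul_div_assoc] using
        (Real.summable_pow_div_factorial ((M * (d - c)) * |s - s₀|)).mul_left (abs a + abs b * (d - c))) ?_
    intro n
    have hb := pic_bound (a := a) (b := b) hIo hIc hqc hcd hs₀K hM' n s (Ioo_subset_Icc_self hsK)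
    rw [Real.norm_eq_abs]
    calc |pic q s₀ a b n s|
        ≤ (|a| + |b| * (d - c)) * (M * (d - c)) ^ n * |s - s₀| ^ n / n.factorial := hb
      _ = (|a| + |b| * (d - c)) * ((M * (d - c)) * |s - s₀|) ^ n / n.factorial := by
          simp only [mul_pow]; ring
  -- Continuity of the sum
  have hcontu : ContinuousOn u I := by
    intro s hs
    obtain ⟨c, d, hcd, hs₀K, hsK⟩ := nbhd hIo hIc hs₀ hs
    obtain ⟨M, hM⟩ := isCompact_Icc.exists_bound_of_continuousOn (hqc.mono hcd)
    have hM' : ∀ t ∈ Icc c d, |q t| ≤ M := fun t ht => by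
      simpa [Real.norm_eq_abs] using hM t ht
    have hM0 : 0 ≤ M := le_trans (abs_nonneg _) (hM' s₀ hs₀K)
    have hdc : 0 ≤ d - c := by have := hs₀K.1; have := hs₀K.2; linarith
    have hKcont : ContinuousOn u (Icc c d) := by
      refine continuousOn_tsum (fun n => (pic_contOn hIo hIc hs₀ hqc a b n).mono hcd)
        (f := fun n x => pic q s₀ a b n x)
        (u := fun n => (|a| + |b| * (d - c)) * ((M * (d - c)) * (d - c)) ^ n / n.factorial)
        (by simpa [mul_div_assoc] using
          (Real.summable_pow_div_factorial ((M * (d - c)) * (d - c))).mul_left (abs a + abs b * (d - c))) ?_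
      intro n x hx
      have hb := pic_bound (a := a) (b := b) hIo hIc hqc hcd hs₀K hM' n x hx
      have habs : |x - s₀| ≤ d - c := by
        rw [abs_sub_le_iff]
        constructor <;> linarith [hx.1, hx.2, hs₀K.1, hs₀K.2]
      rw [Real.norm_eq_abs]
      calc |pic q s₀ a b n x|
          ≤ (|a| + |b| * (d - c)) * (M * (d - c)) ^ n * |x - s₀| ^ n / n.factorial := hb
        _ ≤ (|a| + |b| * (d - c)) * (M * (d - c)) ^ n * (d - c) ^ n / n.factorial := by
            gcongr
        _ = (|a| + |b| * (d - c)) * ((M * (d - c)) * (d - c)) ^ n / n.factorial := by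
            simp only [mul_pow]; ring
    exact ((hKcont.continuousAt (Icc_mem_nhds hsK.1 hsK.2)).continuousWithinAt)
  -- The integral equation
  have hInt : ∀ s ∈ I, u s = a + b * (s - s₀) + ∫ t in s₀..s, (s - t) * (q t * u t) := by
    intro s hs
    obtain ⟨c, d, hcd, hs₀K, hsK⟩ := nbhd hIo hIc hs₀ hs
    obtain ⟨M, hM⟩ := isCompact_Icc.exists_bound_of_continuousOn (hqc.mono hcd)
    have hM' : ∀ t ∈ Icc c d, |q t| ≤ M := fun t ht => by
      simpa [Real.norm_eq_abs] using hM t ht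
    have hM0 : 0 ≤ M := le_trans (abs_nonneg _) (hM' s₀ hs₀K)
    have hdc : 0 ≤ d - c := by have := hs₀K.1; have := hs₀K.2; linarith
    have hIuIcc : Set.uIcc s₀ s ⊆ I := hIc.uIcc_subset hs₀ hs
    have huIcc : Set.uIcc s₀ s ⊆ Icc c d := by
      rw [Set.uIcc_eq_union]
      exact Set.union_subset (Set.Icc_subset_Icc hs₀K.1 (Ioo_subset_Icc_self hsK).2)
        (Set.Icc_subset_Icc (Ioo_subset_Icc_self hsK).1 hs₀K.2)
    have FI : ∀ n, ContinuousOn (fun t => (s - t) * (q t * pic q s₀ a b n t)) I :=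
      fun n => (continuousOn_const.sub continuousOn_id).mul
        (hqc.mul (pic_contOn hIo hIc hs₀ hqc a b n))
    have hswap : HasSum (fun n => ∫ t in s₀..s, (s - t) * (q t * pic q s₀ a b n t))
        (∫ t in s₀..s, (s - t) * (q t * u t)) := by
      apply intervalIntegral.hasSum_integral_of_dominated_convergence
        (bound := fun n _ => (d - c) * M *
          ((|a| + |b| * (d - c)) * ((M * (d - c)) * (d - c)) ^ n / n.factorial))
      · exact fun n => ((FI n).mono ((Set.uIoc_subset_uIcc).trans hIuIcc)).aestronglyMeasurable
          measurableSet_uIoc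
      · intro n
        refine ae_of_all _ ?_
        intro t ht
        have htK : t ∈ Icc c d := huIcc (Set.uIoc_subset_uIcc ht)
        have h1 : |s - t| ≤ d - c := by
          rw [abs_sub_le_iff]
          constructor <;> linarith [(Ioo_subset_Icc_self hsK).1, (Ioo_subset_Icc_self hsK).2,
            htK.1, htK.2]
        have hb := pic_bound (a := a) (b := b) hIo hIc hqc hcd hs₀K hM' n t htK
        have habs : |t - s₀| ≤ d - c := by
          rw [abs_sub_le_iff]
          constructor <;> linarith [htK.1, htK.2, hs₀K.1, hs₀K.2]
        have hb2 : |pic q s₀ a b n t|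
            ≤ (|a| + |b| * (d - c)) * ((M * (d - c)) * (d - c)) ^ n / n.factorial := by
          calc |pic q s₀ a b n t|
              ≤ (|a| + |b| * (d - c)) * (M * (d - c)) ^ n * |t - s₀| ^ n / n.factorial := hb
            _ ≤ (|a| + |b| * (d - c)) * (M * (d - c)) ^ n * (d - c) ^ n / n.factorial := by
                gcongr
            _ = (|a| + |b| * (d - c)) * ((M * (d - c)) * (d - c)) ^ n / n.factorial := by
                simp only [mul_pow]; ring
        rw [Real.norm_eq_abs, abs_mul, abs_mul]
        refine mul_le_mul h1 (mul_le_mul (hM' t htK) hb2 (abs_nonneg _) hM0) (by positivity) hdc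
          |>.trans_eq (by ring)
      · refine ae_of_all _ fun t _ => ?_
        simpa [mul_div_assoc] using
          (((Real.summable_pow_div_factorial ((M * (d - c)) * (d - c))).mul_left (abs a + abs b * (d - c))).mul_left ((d - c) * M))
      · exact intervalIntegrable_const
      · refine ae_of_all _ ?_
        intro t ht
        have htI : t ∈ I := hIuIcc (Set.uIoc_subset_uIcc ht)
        have := ((summ t htI).hasSum).mul_left ((s - t) * q t)
        simpa [mul_assoc] using this
    have h0 : u s = pic q s₀ a b 0 s + ∑' n, pic q s₀ a b (n + 1) s :=
      Summable.tsum_eq_zero_add (summ s hs)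
    rw [h0]
    simp only [pic]
    rw [hswap.tsum_eq]
  -- derivative structure
  have hqu : ContinuousOn (fun t => q t * u t) I := hqc.mul hcontu
  set G : ℝ → ℝ := fun x => ∫ t in s₀..x, q t * u t with hG
  set Hh : ℝ → ℝ := fun x => ∫ t in s₀..x, t * (q t * u t) with hHh
  set u' : ℝ → ℝ := fun x => b + G x with hu'
  have hEq2 : ∀ x ∈ I, u x = a + b * (x - s₀) + (x * G x - Hh x) := by
    intro x hx
    rw [hInt x hx, kernel_eq hIc hs₀ hqu hx]
  have hu'd : ∀ s ∈ I, HasDerivAt u' (q s * u s) s := fun s hs =>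
    (ftc hIo hIc hs₀ hqu hs).const_add b
  have hud : ∀ s ∈ I, HasDerivAt u (u' s) s := by
    intro s hs
    have hGd := ftc hIo hIc hs₀ hqu hs
    have hHd := ftc hIo hIc hs₀ (continuousOn_id.mul hqu) hs
    have h1 : HasDerivAt (fun x => a + b * (x - s₀) + (x * G x - Hh x)) (u' s) s := by
      have := ((hasDerivAt_const s a).add
          (((hasDerivAt_id s).sub_const s₀).const_mul b)).add
          (((hasDerivAt_id s).mul hGd).sub hHd)
      exact this.congr_deriv (by
        simp only [hu', hG, Pi.mul_apply, id]
        ring)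
    exact h1.congr_of_eventuallyEq
      (Filter.eventuallyEq_of_mem (hIo.mem_nhds hs) (fun x hx => hEq2 x hx))
  -- initial values
  have hu0 : u s₀ = a := by
    have h0 := hInt s₀ hs₀
    simpa using h0
  have hu'0 : u' s₀ = b := by simp [hu', hG]
  -- smoothness
  have hsm : ∀ n : ℕ, ContDiffOn ℝ n u I ∧ ContDiffOn ℝ n u' I := by
    intro n
    induction n with
    | zero =>
        rw [show ((0 : ℕ) : WithTop ℕ∞) = 0 from rfl, contDiffOn_zero, contDiffOn_zero]
        exact ⟨hcontu, fun s hs =>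
          ((hu'd s hs).differentiableAt.continuousAt).continuousWithinAt⟩
    | succ n ih =>
        refine ⟨contDiffOn_nat_of_hasDerivAt hIo hud ih.2,
          contDiffOn_nat_of_hasDerivAt hIo hu'd (ContDiffOn.mul ?_ ih.1)⟩
        exact hq.of_le (by exact_mod_cast le_top)
  exact ⟨u, u', hu0, hu'0, contDiffOn_infty.2 fun n => (hsm n).1,
    contDiffOn_infty.2 fun n => (hsm n).2, hud, hu'd⟩


end Stmt6Aux

/-- existence part of the fundamental theorem for non-degenerate
null curves: a null curve with prescribed lightlike curvature `κ` exists. -/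
theorem stmt6
    (I : Set ℝ) (hIopen : IsOpen I) (hIconn : I.OrdConnected)
    (H : ℝ) (hH : H ≠ 0)
    (κ : ℝ → ℝ) (hκsm : ContDiffOn ℝ (⊤ : ℕ∞) κ I) :
    ∃ γ : ℝ → Fin 3 → ℝ,
      ContDiffOn ℝ (⊤ : ℕ∞) γ I ∧
      ∀ s ∈ I,
        ml (deriv γ s) (deriv γ s) = 0 ∧
        ml (deriv (deriv γ) s) (deriv (deriv γ) s) = H ^ 2 ∧
        ml (deriv (deriv (deriv γ)) s) (deriv (deriv (deriv γ)) s)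
          = 2 * H ^ 3 * κ s := by
  rcases I.eq_empty_or_nonempty with hemp | ⟨s₀, hs₀⟩
  · exact ⟨fun _ _ => 0, by rw [hemp]; exact fun x hx => absurd hx (Set.notMem_empty x), by simp [hemp]⟩
  set q : ℝ → ℝ := fun s => -(H/2) * κ s with hqdef
  have hq : ContDiffOn ℝ ∞ q I := contDiffOn_const.mul hκsm
  obtain ⟨u, u', hu0, hu'0, husm, hu'sm, hud, hu'd⟩ :=
    Stmt6Aux.exists_sol hIopen hIconn hs₀ hq 1 0
  obtain ⟨v, v', hv0, hv'0, hvsm, hv'sm, hvd, hv'd⟩ :=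
    Stmt6Aux.exists_sol hIopen hIconn hs₀ hq 0 H
  have hconv : Convex ℝ I := convex_iff_ordConnected.mpr hIconn
  -- the Wronskian is constant
  have hwconst : ∀ s ∈ I, u s * v' s - u' s * v s = H := by
    have hwd : ∀ s ∈ I, HasDerivAt (fun x => u x * v' x - u' x * v x) 0 s := by
      intro s hs
      have h := ((hud s hs).mul (hv'd s hs)).sub ((hu'd s hs).mul (hvd s hs))
      exact h.congr_deriv (by ring)
    intro s hs
    have h1 : u s * v' s - u' s * v s = u s₀ * v' s₀ - u' s₀ * v s₀ := by
      apply hconv.is_const_of_fderivWithin_eq_zero (𝕜 := ℝ)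
        (fun x hx => ((hwd x hx).differentiableAt).differentiableWithinAt) ?_ hs hs₀
      intro x hx
      rw [fderivWithin_of_isOpen hIopen hx, (hwd x hx).hasFDerivAt.fderiv]
      ext y
      simp
    rw [h1, hu0, hu'0, hv0, hv'0]
    ring
  -- curve and its derivative tower
  set A : ℝ → Fin 3 → ℝ := fun x =>
    ![(u x ^ 2 + v x ^ 2) / 2, (u x ^ 2 - v x ^ 2) / 2, u x * v x] with hA
  set γ : ℝ → Fin 3 → ℝ := fun x =>
    ![∫ t in s₀..x, (u t ^ 2 + v t ^ 2) / 2,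
      ∫ t in s₀..x, (u t ^ 2 - v t ^ 2) / 2,
      ∫ t in s₀..x, u t * v t] with hγ
  set B : ℝ → Fin 3 → ℝ := fun x =>
    ![u x * u' x + v x * v' x, u x * u' x - v x * v' x, u' x * v x + u x * v' x] with hB
  set C : ℝ → Fin 3 → ℝ := fun x =>
    ![u' x ^ 2 + q x * u x ^ 2 + v' x ^ 2 + q x * v x ^ 2,
      u' x ^ 2 + q x * u x ^ 2 - v' x ^ 2 - q x * v x ^ 2,
      2 * (u' x * v' x) + 2 * (q x * u x * v x)] with hC
  have hPsm : ContDiffOn ℝ ∞ (fun t => (u t ^ 2 + v t ^ 2) / 2) I :=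
    ((husm.pow 2).add (hvsm.pow 2)).div_const 2
  have hQsm : ContDiffOn ℝ ∞ (fun t => (u t ^ 2 - v t ^ 2) / 2) I :=
    ((husm.pow 2).sub (hvsm.pow 2)).div_const 2
  have hRsm : ContDiffOn ℝ ∞ (fun t => u t * v t) I := husm.mul hvsm
  have hAd : ∀ s ∈ I, HasDerivAt γ (A s) s := by
    intro s hs
    refine hasDerivAt_pi.mpr fun i => ?_
    fin_cases i
    · simpa [hγ, hA] using Stmt6Aux.ftc hIopen hIconn hs₀ hPsm.continuousOn hs
    · simpa [hγ, hA] using Stmt6Aux.ftc hIopen hIconn hs₀ hQsm.continuousOn hs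
    · simpa [hγ, hA] using Stmt6Aux.ftc hIopen hIconn hs₀ hRsm.continuousOn hs
  have hBd : ∀ s ∈ I, HasDerivAt A (B s) s := by
    intro s hs
    refine hasDerivAt_pi.mpr fun i => ?_
    fin_cases i
    · have h' : HasDerivAt (fun x => (u x ^ 2 + v x ^ 2) / 2) (u s * u' s + v s * v' s) s := by
        exact ((((hud s hs).pow 2).add ((hvd s hs).pow 2)).div_const 2).congr_deriv (by ring)
      simpa [hA, hB] using h'
    · have h' : HasDerivAt (fun x => (u x ^ 2 - v x ^ 2) / 2) (u s * u' s - v s * v' s) s := by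
        exact ((((hud s hs).pow 2).sub ((hvd s hs).pow 2)).div_const 2).congr_deriv (by ring)
      simpa [hA, hB] using h'
    · have h' : HasDerivAt (fun x => u x * v x) (u' s * v s + u s * v' s) s :=
        (hud s hs).mul (hvd s hs)
      simpa [hA, hB] using h'
  have hCd : ∀ s ∈ I, HasDerivAt B (C s) s := by
    intro s hs
    refine hasDerivAt_pi.mpr fun i => ?_
    fin_cases i
    · have h' : HasDerivAt (fun x => u x * u' x + v x * v' x)
          (u' s ^ 2 + q s * u s ^ 2 + v' s ^ 2 + q s * v s ^ 2) s := by
        exact (((hud s hs).mul (hu'd s hs)).add ((hvd s hs).mul (hv'd s hs))).congr_deriv (by ring)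
      simpa [hB, hC] using h'
    · have h' : HasDerivAt (fun x => u x * u' x - v x * v' x)
          (u' s ^ 2 + q s * u s ^ 2 - v' s ^ 2 - q s * v s ^ 2) s := by
        exact (((hud s hs).mul (hu'd s hs)).sub ((hvd s hs).mul (hv'd s hs))).congr_deriv (by ring)
      simpa [hB, hC] using h'
    · have h' : HasDerivAt (fun x => u' x * v x + u x * v' x)
          (2 * (u' s * v' s) + 2 * (q s * u s * v s)) s := by
        exact (((hu'd s hs).mul (hvd s hs)).add ((hud s hs).mul (hv'd s hs))).congr_deriv (by ring)
      simpa [hB, hC] using h'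
  have hd1 : ∀ s ∈ I, deriv γ s = A s := fun s hs => (hAd s hs).deriv
  have hd2 : ∀ s ∈ I, deriv (deriv γ) s = B s := by
    intro s hs
    have he : deriv γ =ᶠ[nhds s] A :=
      Filter.eventuallyEq_of_mem (hIopen.mem_nhds hs) fun x hx => hd1 x hx
    rw [he.deriv_eq, (hBd s hs).deriv]
  have hd3 : ∀ s ∈ I, deriv (deriv (deriv γ)) s = C s := by
    intro s hs
    have he : deriv (deriv γ) =ᶠ[nhds s] B :=
      Filter.eventuallyEq_of_mem (hIopen.mem_nhds hs) fun x hx => hd2 x hx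
    rw [he.deriv_eq, (hCd s hs).deriv]
  refine ⟨γ, ?_, fun s hs => ⟨?_, ?_, ?_⟩⟩
  · refine contDiffOn_pi.mpr fun i => ?_
    fin_cases i
    · refine Stmt6Aux.contDiffOn_top_of_hasDerivAt hIopen
        (fun s hs => ?_) hPsm
      simpa [hγ] using Stmt6Aux.ftc hIopen hIconn hs₀ hPsm.continuousOn hs
    · refine Stmt6Aux.contDiffOn_top_of_hasDerivAt hIopen
        (fun s hs => ?_) hQsm
      simpa [hγ] using Stmt6Aux.ftc hIopen hIconn hs₀ hQsm.continuousOn hs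
    · refine Stmt6Aux.contDiffOn_top_of_hasDerivAt hIopen
        (fun s hs => ?_) hRsm
      simpa [hγ] using Stmt6Aux.ftc hIopen hIconn hs₀ hRsm.continuousOn hs
  · rw [hd1 s hs]
    simp only [ml, hA]
    simp
    ring
  · rw [hd2 s hs]
    have hw := hwconst s hs
    calc ml (B s) (B s) = (u s * v' s - u' s * v s) ^ 2 := by
          simp only [ml, hB]
          simp
          ring
      _ = H ^ 2 := by rw [hw]
  · rw [hd3 s hs]
    have hw := hwconst s hs
    calc ml (C s) (C s) = -4 * q s * (u s * v' s - u' s * v s) ^ 2 := by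
          simp only [ml, hC]
          simp
          ring
      _ = -4 * (-(H/2) * κ s) * H ^ 2 := by rw [hw, hqdef]
      _ = 2 * H ^ 3 * κ s := by ring
end
end

section
/- Let I ⊆ ℝ be an open interval, H a nonzero real number, and h : I → ℝ a smooth function with h'(s) ≠ 0 for all s ∈ I. Define B := −(H/(2h'))·(−1 − h², 1 − h², 2h), C := (1/H)·B', and A := (S(h)/H²)·B + (1/H²)·B'', where S(h) is the Schwarzian derivative of h. Then (A,B,C) satisfies the null frame conditions ⟨A,A⟩ = ⟨B,B⟩ = 0, ⟨A,B⟩ = −1, ⟨A,C⟩ = ⟨B,C⟩ = 0, ⟨C,C⟩ = 1, C = A × B, and the Frenet–Serret equations A' = −(S(h)/H)·C, B' = H·C, C' = H·A − (S(h)/H)·B hold on I. -/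
noncomputable section

private lemma hda_congr_all {f g : ℝ → ℝ} {x d d' : ℝ} (hg : HasDerivAt g d x)
    (hfg : ∀ u, f u = g u) (e : d' = d) : HasDerivAt f d' x := by
  have h1 : f = g := funext hfg
  rw [h1, e]; exact hg

private lemma piD {f : ℝ → Fin 3 → ℝ} {v : Fin 3 → ℝ} {t : ℝ}
    (h0 : HasDerivAt (fun x => f x 0) (v 0) t)
    (h1 : HasDerivAt (fun x => f x 1) (v 1) t)
    (h2 : HasDerivAt (fun x => f x 2) (v 2) t) : HasDerivAt f v t := by
  refine hasDerivAt_pi.2 ?_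
  intro i
  fin_cases i
  · exact h0
  · exact h1
  · exact h2

/-- Explicit formula for `B'`. -/
def V1 (H : ℝ) (h : ℝ → ℝ) : ℝ → Fin 3 → ℝ := fun t =>
  ![H * (h t - (1 + h t ^ 2) * deriv (deriv h) t / (2 * deriv h t ^ 2)),
    H * (h t + (1 - h t ^ 2) * deriv (deriv h) t / (2 * deriv h t ^ 2)),
    H * (-1 + h t * deriv (deriv h) t / deriv h t ^ 2)]

/-- Explicit formula for `B''`. -/
def V2 (H : ℝ) (h : ℝ → ℝ) : ℝ → Fin 3 → ℝ := fun t =>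
  ![H * (deriv h t
      - (2 * h t * deriv h t * deriv (deriv h) t
          + (1 + h t ^ 2) * deriv (deriv (deriv h)) t) / (2 * deriv h t ^ 2)
      + (1 + h t ^ 2) * deriv (deriv h) t ^ 2 / deriv h t ^ 3),
    H * (deriv h t
      + (-(2 * h t * deriv h t * deriv (deriv h) t)
          + (1 - h t ^ 2) * deriv (deriv (deriv h)) t) / (2 * deriv h t ^ 2)
      - (1 - h t ^ 2) * deriv (deriv h) t ^ 2 / deriv h t ^ 3),
    H * ((deriv h t * deriv (deriv h) t + h t * deriv (deriv (deriv h)) t) / deriv h t ^ 2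
      - 2 * h t * deriv (deriv h) t ^ 2 / deriv h t ^ 3)]

set_option maxHeartbeats 3200000 in
/-- the frame `(A,B,C)` built from a function `h` with `h' ≠ 0`
is a null frame satisfying the B-scroll Frenet–Serret equations with
curvature `κ₂ = −S(h)/H`. -/
theorem stmt7
    (I : Set ℝ) (hIopen : IsOpen I) (hIconn : I.OrdConnected)
    (H : ℝ) (hH : H ≠ 0)
    (h : ℝ → ℝ) (hhsm : ContDiffOn ℝ (⊤ : ℕ∞) h I)
    (hh' : ∀ s ∈ I, deriv h s ≠ 0)
    (Sh : ℝ → ℝ)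
    (hShdef : ∀ s, Sh s = deriv (deriv (deriv h)) s / deriv h s
      - (3 / 2) * (deriv (deriv h) s / deriv h s) ^ 2)
    (A B C : ℝ → Fin 3 → ℝ)
    (hBdef : ∀ s, B s =
      (-(H / (2 * deriv h s))) • ![-1 - h s ^ 2, 1 - h s ^ 2, 2 * h s])
    (hCdef : ∀ s, C s = (1 / H) • deriv B s)
    (hAdef : ∀ s, A s = (Sh s / H ^ 2) • B s + (1 / H ^ 2) • deriv (deriv B) s) :
    ∀ s ∈ I,
      ml (A s) (A s) = 0 ∧
      ml (B s) (B s) = 0 ∧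
      ml (A s) (B s) = -1 ∧
      ml (A s) (C s) = 0 ∧
      ml (B s) (C s) = 0 ∧
      ml (C s) (C s) = 1 ∧
      C s = lcross (A s) (B s) ∧
      deriv A s = (-(Sh s / H)) • C s ∧
      deriv B s = H • C s ∧
      deriv C s = H • A s + (-(Sh s / H)) • B s := by
  have c1 : ContDiffOn ℝ (⊤ : ℕ∞) (deriv h) I := hhsm.deriv_of_isOpen hIopen (le_of_eq rfl)
  have c2 : ContDiffOn ℝ (⊤ : ℕ∞) (deriv (deriv h)) I := c1.deriv_of_isOpen hIopen (le_of_eq rfl)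
  have c3 : ContDiffOn ℝ (⊤ : ℕ∞) (deriv (deriv (deriv h))) I :=
    c2.deriv_of_isOpen hIopen (le_of_eq rfl)
  have key : ∀ (f : ℝ → ℝ), ContDiffOn ℝ (⊤ : ℕ∞) f I →
      ∀ t ∈ I, HasDerivAt f (deriv f t) t := fun f hf t ht =>
    ((hf.differentiableOn (by simp)).differentiableAt
      (hIopen.mem_nhds ht)).hasDerivAt
  have L1 : ∀ t ∈ I, HasDerivAt B (V1 H h t) t := by
    intro t ht
    have hp := hh' t ht
    have Dh := key h hhsm t ht
    have Dp := key _ c1 t ht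
    have Dq := key _ c2 t ht
    have h2p : 2 * deriv h t ≠ 0 := mul_ne_zero (by norm_num) hp
    refine piD ?_ ?_ ?_
    · exact hda_congr_all
        ((((hasDerivAt_const t H).div (Dp.const_mul 2) h2p).neg).mul
          ((hasDerivAt_const t (-1)).sub (Dh.pow 2)))
        (fun u => by rw [hBdef]; simp; try ring)
        (by simp only [V1, Matrix.cons_val_zero, Pi.add_apply, Pi.sub_apply, Pi.mul_apply, Pi.div_apply, Pi.neg_apply, Pi.pow_apply]; field_simp; ring)
    · exact hda_congr_all
        ((((hasDerivAt_const t H).div (Dp.const_mul 2) h2p).neg).mul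
          ((hasDerivAt_const t 1).sub (Dh.pow 2)))
        (fun u => by rw [hBdef]; simp; try ring)
        (by simp only [V1, Matrix.cons_val_one, Matrix.head_cons, Matrix.cons_val_zero, Pi.add_apply, Pi.sub_apply, Pi.mul_apply, Pi.div_apply, Pi.neg_apply, Pi.pow_apply]; field_simp; ring)
    · exact hda_congr_all
        ((((hasDerivAt_const t H).div (Dp.const_mul 2) h2p).neg).mul
          (Dh.const_mul 2))
        (fun u => by rw [hBdef]; simp; try ring)
        (by simp only [V1, Matrix.cons_val_two, Matrix.tail_cons, Matrix.head_cons, Pi.add_apply, Pi.sub_apply, Pi.mul_apply, Pi.div_apply, Pi.neg_apply, Pi.pow_apply]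
            field_simp; ring)
  have L2 : ∀ t ∈ I, HasDerivAt (V1 H h) (V2 H h t) t := by
    intro t ht
    have hp := hh' t ht
    have Dh := key h hhsm t ht
    have Dp := key _ c1 t ht
    have Dq := key _ c2 t ht
    have Dr := key _ c3 t ht
    have hp2 : deriv h t ^ 2 ≠ 0 := pow_ne_zero _ hp
    have hp3 : deriv h t ^ 3 ≠ 0 := pow_ne_zero _ hp
    have h2p2 : 2 * deriv h t ^ 2 ≠ 0 := mul_ne_zero (by norm_num) hp2
    refine piD ?_ ?_ ?_
    · exact hda_congr_all
        ((hasDerivAt_const t H).mul (Dh.sub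
          ((((hasDerivAt_const t 1).add (Dh.pow 2)).mul Dq).div
            ((Dp.pow 2).const_mul 2) h2p2)))
        (fun u => by simp only [V1, Matrix.cons_val_zero, Pi.add_apply, Pi.sub_apply, Pi.mul_apply, Pi.div_apply, Pi.neg_apply, Pi.pow_apply]; try ring)
        (by simp only [V2, Matrix.cons_val_zero, Pi.add_apply, Pi.sub_apply, Pi.mul_apply, Pi.div_apply, Pi.neg_apply, Pi.pow_apply]; field_simp; ring)
    · exact hda_congr_all
        ((hasDerivAt_const t H).mul (Dh.add
          ((((hasDerivAt_const t 1).sub (Dh.pow 2)).mul Dq).div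
            ((Dp.pow 2).const_mul 2) h2p2)))
        (fun u => by simp only [V1, Matrix.cons_val_one, Matrix.head_cons, Matrix.cons_val_zero, Pi.add_apply, Pi.sub_apply, Pi.mul_apply, Pi.div_apply, Pi.neg_apply, Pi.pow_apply]; try ring)
        (by simp only [V2, Matrix.cons_val_one, Matrix.head_cons, Matrix.cons_val_zero, Pi.add_apply, Pi.sub_apply, Pi.mul_apply, Pi.div_apply, Pi.neg_apply, Pi.pow_apply]; field_simp; ring)
    · exact hda_congr_all
        ((hasDerivAt_const t H).mul ((hasDerivAt_const t (-1)).add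
          ((Dh.mul Dq).div (Dp.pow 2) hp2)))
        (fun u => by simp only [V1, Matrix.cons_val_two, Matrix.tail_cons, Matrix.head_cons, Pi.add_apply, Pi.sub_apply, Pi.mul_apply, Pi.div_apply, Pi.neg_apply, Pi.pow_apply]
                     try ring)
        (by simp only [V2, Matrix.cons_val_two, Matrix.tail_cons, Matrix.head_cons, Pi.add_apply, Pi.sub_apply, Pi.mul_apply, Pi.div_apply, Pi.neg_apply, Pi.pow_apply]
            field_simp; ring)
  have hdB : ∀ t ∈ I, deriv B t = V1 H h t := fun t ht => (L1 t ht).deriv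
  have hdB2 : ∀ t ∈ I, deriv (deriv B) t = V2 H h t := by
    intro t ht
    have ev : deriv B =ᶠ[nhds t] V1 H h := by
      filter_upwards [hIopen.mem_nhds ht] with u hu using hdB u hu
    rw [ev.deriv_eq]
    exact (L2 t ht).deriv
  have hAx : ∀ t ∈ I, A t = (Sh t / H ^ 2) • B t + (1 / H ^ 2) • V2 H h t :=
    fun t ht => by rw [hAdef, hdB2 t ht]
  intro s hs
  have hp := hh' s hs
  have hp2 : deriv h s ^ 2 ≠ 0 := pow_ne_zero _ hp
  have hp3 : deriv h s ^ 3 ≠ 0 := pow_ne_zero _ hp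
  have h2p2 : 2 * deriv h s ^ 2 ≠ 0 := mul_ne_zero (by norm_num) hp2
  have h2p : 2 * deriv h s ≠ 0 := mul_ne_zero (by norm_num) hp
  have eC : C s = (1 / H) • V1 H h s := by rw [hCdef, hdB s hs]
  have eB0 : B s 0 = -(H / (2 * deriv h s)) * (-1 - h s ^ 2) := by rw [hBdef]; simp; try ring
  have eB1 : B s 1 = -(H / (2 * deriv h s)) * (1 - h s ^ 2) := by rw [hBdef]; simp; try ring
  have eB2 : B s 2 = -(H / (2 * deriv h s)) * (2 * h s) := by rw [hBdef]; simp; try ring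
  have eC0 : C s 0 = 1 / H *
      (H * (h s - (1 + h s ^ 2) * deriv (deriv h) s / (2 * deriv h s ^ 2))) := by
    rw [eC]; simp [V1]
  have eC1 : C s 1 = 1 / H *
      (H * (h s + (1 - h s ^ 2) * deriv (deriv h) s / (2 * deriv h s ^ 2))) := by
    rw [eC]; simp [V1]
  have eC2 : C s 2 = 1 / H *
      (H * (-1 + h s * deriv (deriv h) s / deriv h s ^ 2)) := by
    rw [eC]; simp [V1]
  have eV0 : V2 H h s 0 = H * (deriv h s
      - (2 * h s * deriv h s * deriv (deriv h) s
          + (1 + h s ^ 2) * deriv (deriv (deriv h)) s) / (2 * deriv h s ^ 2)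
      + (1 + h s ^ 2) * deriv (deriv h) s ^ 2 / deriv h s ^ 3) := by simp [V2]
  have eV1 : V2 H h s 1 = H * (deriv h s
      + (-(2 * h s * deriv h s * deriv (deriv h) s)
          + (1 - h s ^ 2) * deriv (deriv (deriv h)) s) / (2 * deriv h s ^ 2)
      - (1 - h s ^ 2) * deriv (deriv h) s ^ 2 / deriv h s ^ 3) := by simp [V2]
  have eV2 : V2 H h s 2 = H * ((deriv h s * deriv (deriv h) s
        + h s * deriv (deriv (deriv h)) s) / deriv h s ^ 2
      - 2 * h s * deriv (deriv h) s ^ 2 / deriv h s ^ 3) := by simp [V2]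
  have eA0 : A s 0 = Sh s / H ^ 2 * B s 0 + 1 / H ^ 2 * V2 H h s 0 := by
    rw [hAx s hs]; simp
  have eA1 : A s 1 = Sh s / H ^ 2 * B s 1 + 1 / H ^ 2 * V2 H h s 1 := by
    rw [hAx s hs]; simp
  have eA2 : A s 2 = Sh s / H ^ 2 * B s 2 + 1 / H ^ 2 * V2 H h s 2 := by
    rw [hAx s hs]; simp
  refine ⟨?_, ?_, ?_, ?_, ?_, ?_, ?_, ?_, ?_, ?_⟩
  · simp only [ml, eA0, eA1, eA2, eB0, eB1, eB2, eV0, eV1, eV2, hShdef]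
    field_simp
    ring
  · simp only [ml, eB0, eB1, eB2]
    field_simp
    ring
  · simp only [ml, eA0, eA1, eA2, eB0, eB1, eB2, eV0, eV1, eV2, hShdef]
    field_simp
    ring
  · simp only [ml, eA0, eA1, eA2, eB0, eB1, eB2, eC0, eC1, eC2, eV0, eV1, eV2, hShdef]
    field_simp
    ring
  · simp only [ml, eB0, eB1, eB2, eC0, eC1, eC2]
    field_simp
    ring
  · simp only [ml, eC0, eC1, eC2]
    field_simp
    ring
  · funext i
    fin_cases i
    · show C s 0 = lcross (A s) (B s) 0
      simp only [lcross, Matrix.cons_val_zero, eA1, eA2, eB1, eB2, eC0, eV1, eV2, hShdef]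
      field_simp
      ring
    · show C s 1 = lcross (A s) (B s) 1
      simp only [lcross, Matrix.cons_val_one, Matrix.head_cons, Matrix.cons_val_zero,
        eA0, eA2, eB0, eB2, eC1, eV0, eV2, hShdef]
      field_simp
      ring
    · show C s 2 = lcross (A s) (B s) 2
      simp only [lcross, Matrix.cons_val_two, Matrix.tail_cons, Matrix.head_cons,
        eA0, eA1, eB0, eB1, eC2, eV0, eV1, hShdef]
      field_simp
      ring
  · -- deriv A
    have Dh := key h hhsm s hs
    have Dp := key _ c1 s hs
    have Dq := key _ c2 s hs
    have Dr := key _ c3 s hs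
    have evA : A =ᶠ[nhds s] fun u => (Sh u / H ^ 2) • B u + (1 / H ^ 2) • V2 H h u := by
      filter_upwards [hIopen.mem_nhds hs] with u hu using hAx u hu
    rw [evA.deriv_eq]
    have combSh := (Dr.div Dp hp).sub (((Dq.div Dp hp).pow 2).const_mul (3 / 2))
    have DA : HasDerivAt (fun u => (Sh u / H ^ 2) • B u + (1 / H ^ 2) • V2 H h u)
        ((-(Sh s / H)) • C s) s := by
      refine piD ?_ ?_ ?_
      · exact hda_congr_all
          (((combSh.div_const (H ^ 2)).mul
            ((((hasDerivAt_const s H).div (Dp.const_mul 2) h2p).neg).mul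
              ((hasDerivAt_const s (-1)).sub (Dh.pow 2)))).add
            (((hasDerivAt_const s H).mul ((Dp.sub
              (((((Dh.const_mul 2).mul Dp).mul Dq).add
                (((hasDerivAt_const s 1).add (Dh.pow 2)).mul Dr)).div
                ((Dp.pow 2).const_mul 2) h2p2)).add
              ((((hasDerivAt_const s 1).add (Dh.pow 2)).mul (Dq.pow 2)).div
                (Dp.pow 3) hp3))).const_mul (1 / H ^ 2)))
          (fun u => by
            simp only [Pi.add_apply, Pi.smul_apply, smul_eq_mul, Pi.sub_apply, Pi.mul_apply, Pi.div_apply, Pi.neg_apply, Pi.pow_apply, hShdef, hBdef, V2,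
              Matrix.cons_val_zero]
            try ring)
          (by
            simp only [Pi.smul_apply, smul_eq_mul, Pi.add_apply, Pi.sub_apply, Pi.mul_apply, Pi.div_apply, Pi.neg_apply, Pi.pow_apply, Nat.cast_ofNat, Nat.reduceSub, pow_one, eC0, hShdef]
            field_simp
            ring)
      · exact hda_congr_all
          (((combSh.div_const (H ^ 2)).mul
            ((((hasDerivAt_const s H).div (Dp.const_mul 2) h2p).neg).mul
              ((hasDerivAt_const s 1).sub (Dh.pow 2)))).add
            (((hasDerivAt_const s H).mul ((Dp.add
              ((((((Dh.const_mul 2).mul Dp).mul Dq).neg).add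
                (((hasDerivAt_const s 1).sub (Dh.pow 2)).mul Dr)).div
                ((Dp.pow 2).const_mul 2) h2p2)).sub
              ((((hasDerivAt_const s 1).sub (Dh.pow 2)).mul (Dq.pow 2)).div
                (Dp.pow 3) hp3))).const_mul (1 / H ^ 2)))
          (fun u => by
            simp only [Pi.add_apply, Pi.smul_apply, smul_eq_mul, Pi.sub_apply, Pi.mul_apply, Pi.div_apply, Pi.neg_apply, Pi.pow_apply, hShdef, hBdef, V2,
              Matrix.cons_val_one, Matrix.head_cons, Matrix.cons_val_zero]
            try ring)
          (by
            simp only [Pi.smul_apply, smul_eq_mul, Pi.add_apply, Pi.sub_apply, Pi.mul_apply, Pi.div_apply, Pi.neg_apply, Pi.pow_apply, Nat.cast_ofNat, Nat.reduceSub, pow_one, eC1, hShdef]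
            field_simp
            ring)
      · exact hda_congr_all
          (((combSh.div_const (H ^ 2)).mul
            ((((hasDerivAt_const s H).div (Dp.const_mul 2) h2p).neg).mul
              (Dh.const_mul 2))).add
            (((hasDerivAt_const s H).mul ((((Dp.mul Dq).add (Dh.mul Dr)).div
              (Dp.pow 2) hp2).sub
              (((Dh.const_mul 2).mul (Dq.pow 2)).div (Dp.pow 3) hp3))).const_mul
              (1 / H ^ 2)))
          (fun u => by
            simp only [Pi.add_apply, Pi.smul_apply, smul_eq_mul, Pi.sub_apply, Pi.mul_apply, Pi.div_apply, Pi.neg_apply, Pi.pow_apply, hShdef, hBdef, V2,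
              Matrix.cons_val_two, Matrix.tail_cons, Matrix.head_cons]
            try ring)
          (by
            simp only [Pi.smul_apply, smul_eq_mul, Pi.add_apply, Pi.sub_apply, Pi.mul_apply, Pi.div_apply, Pi.neg_apply, Pi.pow_apply, Nat.cast_ofNat, Nat.reduceSub, pow_one, eC2, hShdef]
            field_simp
            ring)
    exact DA.deriv
  · rw [hCdef, smul_smul, mul_one_div, div_self hH, one_smul]
  · -- deriv C
    have evC : C =ᶠ[nhds s] fun u => (1 / H) • V1 H h u := by
      filter_upwards [hIopen.mem_nhds hs] with u hu
      rw [hCdef, hdB u hu]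
    have DC : HasDerivAt (fun u => (1 / H) • V1 H h u) ((1 / H) • V2 H h s) s :=
      (L2 s hs).const_smul (1 / H)
    rw [evC.deriv_eq, DC.deriv, hAx s hs]
    funext i
    simp only [Pi.add_apply, Pi.smul_apply, smul_eq_mul]
    field_simp
    ring
end
end

section
/- Let I ⊆ ℝ be an open interval, H a nonzero real number, and h : I → ℝ a smooth function with h'(s) ≠ 0 for all s ∈ I. Define B := −(H/(2h'))·(−1 − h², 1 − h², 2h). Then on all of I one has ⟨B,B⟩ = 0, ⟨B',B'⟩ = H², H·det(B, B', B'') > 0, and ⟨B'',B''⟩ = 2H²·S(h), so that −⟨B'',B''⟩/(2H³) = −S(h)/H. -/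
noncomputable section

private lemma hw0 : ∀ x : ℝ, HasDerivAt (fun x : ℝ => 1 + x * x) (2 * x) x := by
  intro x
  simpa [two_mul] using ((hasDerivAt_id x).mul (hasDerivAt_id x)).const_add (1:ℝ)

private lemma hw1 : ∀ x : ℝ, HasDerivAt (fun x : ℝ => x * x - 1) (2 * x) x := by
  intro x
  simpa [two_mul] using ((hasDerivAt_id x).mul (hasDerivAt_id x)).sub_const (1:ℝ)

private lemma hw2 : ∀ x : ℝ, HasDerivAt (fun x : ℝ => -2 * x) ((fun _ : ℝ => (-2:ℝ)) x) x := by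
  intro x
  simpa using (hasDerivAt_id x).const_mul (-2 : ℝ)

private lemma hw0' : ∀ x : ℝ, HasDerivAt (fun x : ℝ => 2 * x) ((fun _ : ℝ => (2:ℝ)) x) x := by
  intro x
  simpa using (hasDerivAt_id x).const_mul (2 : ℝ)

private lemma hw2' : ∀ x : ℝ, HasDerivAt (fun _ : ℝ => (-2:ℝ)) ((fun _ : ℝ => (0:ℝ)) x) x :=
  fun x => hasDerivAt_const x (-2:ℝ)

private lemma gen1 {h : ℝ → ℝ} {s : ℝ} (hp : HasDerivAt h (deriv h s) s)
    (hq : HasDerivAt (deriv h) (deriv (deriv h) s) s)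
    (hp0 : deriv h s ≠ 0) (H : ℝ) (w w1 : ℝ → ℝ)
    (hw : ∀ x, HasDerivAt w (w1 x) x) :
    HasDerivAt (fun t => H * w (h t) / (2 * deriv h t))
      (H * (w1 (h s) * (deriv h s * deriv h s) - w (h s) * deriv (deriv h) s)
        / (2 * (deriv h s * deriv h s))) s := by
  have hW : HasDerivAt (fun t => w (h t)) (w1 (h s) * deriv h s) s :=
    HasDerivAt.comp s (hw (h s)) hp
  have hnum : HasDerivAt (fun t => H * w (h t)) (H * (w1 (h s) * deriv h s)) s :=
    hW.const_mul H
  have hden : HasDerivAt (fun t => 2 * deriv h t) (2 * deriv (deriv h) s) s :=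
    hq.const_mul 2
  have hden0 : (2:ℝ) * deriv h s ≠ 0 := mul_ne_zero two_ne_zero hp0
  have hval : H * (w1 (h s) * (deriv h s * deriv h s) - w (h s) * deriv (deriv h) s)
        / (2 * (deriv h s * deriv h s))
      = (H * (w1 (h s) * deriv h s) * (2 * deriv h s)
          - H * w (h s) * (2 * deriv (deriv h) s)) / (2 * deriv h s) ^ 2 := by
    field_simp
  rw [hval]
  exact hnum.div hden hden0

private lemma gen2 {h : ℝ → ℝ} {s : ℝ} (hp : HasDerivAt h (deriv h s) s)
    (hq : HasDerivAt (deriv h) (deriv (deriv h) s) s)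
    (hr : HasDerivAt (deriv (deriv h)) (deriv (deriv (deriv h)) s) s)
    (hp0 : deriv h s ≠ 0) (H : ℝ) (w w1 w2 : ℝ → ℝ)
    (hw : ∀ x, HasDerivAt w (w1 x) x) (hw1 : ∀ x, HasDerivAt w1 (w2 x) x) :
    HasDerivAt
      (fun t => H * (w1 (h t) * (deriv h t * deriv h t) - w (h t) * deriv (deriv h) t)
        / (2 * (deriv h t * deriv h t)))
      (H * (w2 (h s) * (deriv h s * deriv h s * (deriv h s * deriv h s))
          - w1 (h s) * (deriv h s * deriv h s) * deriv (deriv h) s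
          - w (h s) * deriv h s * deriv (deriv (deriv h)) s
          + 2 * w (h s) * (deriv (deriv h) s * deriv (deriv h) s))
        / (2 * (deriv h s * (deriv h s * deriv h s)))) s := by
  have hA : HasDerivAt (fun t => w1 (h t)) (w2 (h s) * deriv h s) s :=
    HasDerivAt.comp s (hw1 (h s)) hp
  have hW : HasDerivAt (fun t => w (h t)) (w1 (h s) * deriv h s) s :=
    HasDerivAt.comp s (hw (h s)) hp
  have hP2 : HasDerivAt (fun t => deriv h t * deriv h t)
      (deriv (deriv h) s * deriv h s + deriv h s * deriv (deriv h) s) s := hq.mul hq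
  have hM1 := hA.mul hP2
  have hM2 := hW.mul hr
  have hnum := (hM1.sub hM2).const_mul H
  have hden : HasDerivAt (fun t => 2 * (deriv h t * deriv h t))
      (2 * (deriv (deriv h) s * deriv h s + deriv h s * deriv (deriv h) s)) s :=
    hP2.const_mul 2
  have hden0 : (2:ℝ) * (deriv h s * deriv h s) ≠ 0 :=
    mul_ne_zero two_ne_zero (mul_ne_zero hp0 hp0)
  have key := hnum.div hden hden0
  have hval : H * (w2 (h s) * (deriv h s * deriv h s * (deriv h s * deriv h s))
          - w1 (h s) * (deriv h s * deriv h s) * deriv (deriv h) s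
          - w (h s) * deriv h s * deriv (deriv (deriv h)) s
          + 2 * w (h s) * (deriv (deriv h) s * deriv (deriv h) s))
        / (2 * (deriv h s * (deriv h s * deriv h s)))
      = (H * ((w2 (h s) * deriv h s * (deriv h s * deriv h s)
            + w1 (h s) * (deriv (deriv h) s * deriv h s + deriv h s * deriv (deriv h) s))
          - (w1 (h s) * deriv h s * deriv (deriv h) s
            + w (h s) * deriv (deriv (deriv h)) s)) * (2 * (deriv h s * deriv h s))
          - H * (w1 (h s) * (deriv h s * deriv h s) - w (h s) * deriv (deriv h) s)
            * (2 * (deriv (deriv h) s * deriv h s + deriv h s * deriv (deriv h) s)))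
        / (2 * (deriv h s * deriv h s)) ^ 2 := by
    field_simp
    ring
  rw [hval]
  exact key

set_option maxHeartbeats 1000000 in
/-- the vector field `B = −(H/(2h'))(−1−h², 1−h², 2h)` is lightlike,
satisfies `⟨B',B'⟩ = H²`, `H·det(B,B',B'') > 0`, and `⟨B'',B''⟩ = 2H²·S(h)`,
so that `−⟨B'',B''⟩/(2H³) = −S(h)/H`. -/
theorem stmt8
    (I : Set ℝ) (hIopen : IsOpen I) (hIconn : I.OrdConnected)
    (H : ℝ) (hH : H ≠ 0)
    (h : ℝ → ℝ) (hhsm : ContDiffOn ℝ (⊤ : ℕ∞) h I)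
    (hh' : ∀ s ∈ I, deriv h s ≠ 0)
    (Sh : ℝ → ℝ)
    (hShdef : ∀ s, Sh s = deriv (deriv (deriv h)) s / deriv h s
      - (3 / 2) * (deriv (deriv h) s / deriv h s) ^ 2)
    (B : ℝ → Fin 3 → ℝ)
    (hBdef : ∀ s, B s =
      (-(H / (2 * deriv h s))) • ![-1 - h s ^ 2, 1 - h s ^ 2, 2 * h s]) :
    ∀ s ∈ I,
      ml (B s) (B s) = 0 ∧
      ml (deriv B s) (deriv B s) = H ^ 2 ∧
      0 < H * det3 (B s) (deriv B s) (deriv (deriv B) s) ∧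
      ml (deriv (deriv B) s) (deriv (deriv B) s) = 2 * H ^ 2 * Sh s ∧
      -(ml (deriv (deriv B) s) (deriv (deriv B) s)) / (2 * H ^ 3)
        = -(Sh s) / H := by
  have hc1 : ContDiffOn ℝ (⊤ : ℕ∞) (deriv h) I := hhsm.deriv_of_isOpen hIopen (by simp)
  have hc2 : ContDiffOn ℝ (⊤ : ℕ∞) (deriv (deriv h)) I := hc1.deriv_of_isOpen hIopen (by simp)
  have hd1 : ∀ t ∈ I, HasDerivAt h (deriv h t) t := fun t ht =>
    ((hhsm.differentiableOn (by simp)).differentiableAt (hIopen.mem_nhds ht)).hasDerivAt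
  have hd2 : ∀ t ∈ I, HasDerivAt (deriv h) (deriv (deriv h) t) t := fun t ht =>
    ((hc1.differentiableOn (by simp)).differentiableAt (hIopen.mem_nhds ht)).hasDerivAt
  have hd3 : ∀ t ∈ I, HasDerivAt (deriv (deriv h)) (deriv (deriv (deriv h)) t) t := fun t ht =>
    ((hc2.differentiableOn (by simp)).differentiableAt (hIopen.mem_nhds ht)).hasDerivAt
  have hBfun : B = fun t => ![H * (1 + h t * h t) / (2 * deriv h t),
      H * (h t * h t - 1) / (2 * deriv h t),
      H * (-2 * h t) / (2 * deriv h t)] := by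
    funext t
    rw [hBdef t]
    funext i
    fin_cases i
    · show -(H / (2 * deriv h t)) * (-1 - h t ^ 2) = H * (1 + h t * h t) / (2 * deriv h t)
      ring
    · show -(H / (2 * deriv h t)) * (1 - h t ^ 2) = H * (h t * h t - 1) / (2 * deriv h t)
      ring
    · show -(H / (2 * deriv h t)) * (2 * h t) = H * (-2 * h t) / (2 * deriv h t)
      ring
  have hB1 : ∀ t ∈ I, HasDerivAt B
      (![H * ((2 * h t) * (deriv h t * deriv h t) - (1 + h t * h t) * deriv (deriv h) t) / (2 * (deriv h t * deriv h t)),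
        H * ((2 * h t) * (deriv h t * deriv h t) - (h t * h t - 1) * deriv (deriv h) t) / (2 * (deriv h t * deriv h t)),
        H * ((-2) * (deriv h t * deriv h t) - (-2 * h t) * deriv (deriv h) t) / (2 * (deriv h t * deriv h t))]) t := by
    intro t ht
    rw [hBfun]
    refine hasDerivAt_pi.2 fun i => ?_
    fin_cases i <;>
      simp only [Matrix.cons_val_zero, Matrix.cons_val_one, Matrix.head_cons,
        Matrix.cons_val_two, Matrix.tail_cons, Fin.isValue]
    · exact gen1 (hd1 t ht) (hd2 t ht) (hh' t ht) H _ _ hw0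
    · exact gen1 (hd1 t ht) (hd2 t ht) (hh' t ht) H _ _ hw1
    · exact gen1 (hd1 t ht) (hd2 t ht) (hh' t ht) H _ _ hw2
  intro s hs
  have hp0 := hh' s hs
  have hD1d : HasDerivAt
      (fun t => ![H * ((2 * h t) * (deriv h t * deriv h t) - (1 + h t * h t) * deriv (deriv h) t) / (2 * (deriv h t * deriv h t)),
        H * ((2 * h t) * (deriv h t * deriv h t) - (h t * h t - 1) * deriv (deriv h) t) / (2 * (deriv h t * deriv h t)),
        H * ((-2) * (deriv h t * deriv h t) - (-2 * h t) * deriv (deriv h) t) / (2 * (deriv h t * deriv h t))])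
      (![H * (2 * (deriv h s * deriv h s * (deriv h s * deriv h s))
            - (2 * h s) * (deriv h s * deriv h s) * deriv (deriv h) s
            - (1 + h s * h s) * deriv h s * deriv (deriv (deriv h)) s
            + 2 * (1 + h s * h s) * (deriv (deriv h) s * deriv (deriv h) s))
          / (2 * (deriv h s * (deriv h s * deriv h s))),
        H * (2 * (deriv h s * deriv h s * (deriv h s * deriv h s))
            - (2 * h s) * (deriv h s * deriv h s) * deriv (deriv h) s
            - (h s * h s - 1) * deriv h s * deriv (deriv (deriv h)) s
            + 2 * (h s * h s - 1) * (deriv (deriv h) s * deriv (deriv h) s))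
          / (2 * (deriv h s * (deriv h s * deriv h s))),
        H * (0 * (deriv h s * deriv h s * (deriv h s * deriv h s))
            - (-2) * (deriv h s * deriv h s) * deriv (deriv h) s
            - (-2 * h s) * deriv h s * deriv (deriv (deriv h)) s
            + 2 * (-2 * h s) * (deriv (deriv h) s * deriv (deriv h) s))
          / (2 * (deriv h s * (deriv h s * deriv h s)))]) s := by
    refine hasDerivAt_pi.2 fun i => ?_
    fin_cases i <;>
      simp only [Matrix.cons_val_zero, Matrix.cons_val_one, Matrix.head_cons,
        Matrix.cons_val_two, Matrix.tail_cons, Fin.isValue]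
    · exact gen2 (hd1 s hs) (hd2 s hs) (hd3 s hs) hp0 H _ _ _ hw0 hw0'
    · exact gen2 (hd1 s hs) (hd2 s hs) (hd3 s hs) hp0 H _ _ _ hw1 hw0'
    · exact gen2 (hd1 s hs) (hd2 s hs) (hd3 s hs) hp0 H _ _ _ hw2 hw2'
  have hB2 : HasDerivAt (deriv B) (![H * (2 * (deriv h s * deriv h s * (deriv h s * deriv h s))
            - (2 * h s) * (deriv h s * deriv h s) * deriv (deriv h) s
            - (1 + h s * h s) * deriv h s * deriv (deriv (deriv h)) s
            + 2 * (1 + h s * h s) * (deriv (deriv h) s * deriv (deriv h) s))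
          / (2 * (deriv h s * (deriv h s * deriv h s))),
        H * (2 * (deriv h s * deriv h s * (deriv h s * deriv h s))
            - (2 * h s) * (deriv h s * deriv h s) * deriv (deriv h) s
            - (h s * h s - 1) * deriv h s * deriv (deriv (deriv h)) s
            + 2 * (h s * h s - 1) * (deriv (deriv h) s * deriv (deriv h) s))
          / (2 * (deriv h s * (deriv h s * deriv h s))),
        H * (0 * (deriv h s * deriv h s * (deriv h s * deriv h s))
            - (-2) * (deriv h s * deriv h s) * deriv (deriv h) s
            - (-2 * h s) * deriv h s * deriv (deriv (deriv h)) s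
            + 2 * (-2 * h s) * (deriv (deriv h) s * deriv (deriv h) s))
          / (2 * (deriv h s * (deriv h s * deriv h s)))]) s := by
    refine hD1d.congr_of_eventuallyEq ?_
    filter_upwards [hIopen.mem_nhds hs] with t ht
    exact (hB1 t ht).deriv
  have e0 : B s = ![H * (1 + h s * h s) / (2 * deriv h s),
      H * (h s * h s - 1) / (2 * deriv h s),
      H * (-2 * h s) / (2 * deriv h s)] := by rw [hBfun]
  have e1 := (hB1 s hs).deriv
  have e2 := hB2.deriv
  have g1 : ml (B s) (B s) = 0 := by
    rw [e0]
    simp only [ml, Matrix.cons_val_zero, Matrix.cons_val_one, Matrix.head_cons,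
      Matrix.cons_val_two, Matrix.tail_cons, Fin.isValue]
    field_simp
    ring
  have g2 : ml (deriv B s) (deriv B s) = H ^ 2 := by
    rw [e1]
    simp only [ml, Matrix.cons_val_zero, Matrix.cons_val_one, Matrix.head_cons,
      Matrix.cons_val_two, Matrix.tail_cons, Fin.isValue]
    field_simp
    ring
  have g3 : H * det3 (B s) (deriv B s) (deriv (deriv B) s) = H ^ 4 := by
    rw [e0, e1, e2]
    simp only [det3, Matrix.cons_val_zero, Matrix.cons_val_one, Matrix.head_cons,
      Matrix.cons_val_two, Matrix.tail_cons, Fin.isValue]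
    field_simp
    ring
  have g4 : ml (deriv (deriv B) s) (deriv (deriv B) s) = 2 * H ^ 2 * Sh s := by
    rw [e2, hShdef]
    simp only [ml, Matrix.cons_val_zero, Matrix.cons_val_one, Matrix.head_cons,
      Matrix.cons_val_two, Matrix.tail_cons, Fin.isValue]
    field_simp
    ring
  refine ⟨g1, g2, ?_, g4, ?_⟩
  · rw [g3]
    positivity
  · rw [g4]
    field_simp
end
end

section
/- Let I ⊆ ℝ be an open interval, H a nonzero real number, and A, B, C : I → ℝ³ smooth maps with ⟨A,A⟩ = ⟨B,B⟩ = 0, ⟨A,B⟩ = −1, ⟨A,C⟩ = ⟨B,C⟩ = 0, ⟨C,C⟩ = 1, C = A × B, satisfying Frenet–Serret equations A' = κ₁·A + κ₂·C, B' = −κ₁·B + H·C, C' = H·A + κ₂·B for smooth functions κ₁, κ₂. Define N_L(s,t) := −C(s) − t·H·B(s) and write B = (B₁,B₂,B₃), C = (C₁,C₂,C₃). Then: (i) the third component of N_L(s,t) vanishes if and only if C₃(s) + t·H·B₃(s) = 0; (ii) at any (s,t) where the third component of N_L vanishes one has B₃(s) ≠ 0, hence t = −C₃(s)/(H·B₃(s)),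 and the third component of ∂N_L/∂t at (s,t) equals −H·B₃(s) ≠ 0; (iii) if B₃(s) = 0, then the third component of N_L(s,t) is nonzero for every t ∈ ℝ. -/
noncomputable section

/-- characterization of the zero set of the third component of
the normal `N_L(s,t) = −C(s) − tH·B(s)` of a constant mean curvature `H` null
scroll; on it `B₃ ≠ 0`, `t = −C₃/(H·B₃)` and `∂ₜ⟨N_L,e₃⟩ = −H·B₃ ≠ 0`. -/
theorem stmt11
    (I : Set ℝ) (hIopen : IsOpen I) (hIconn : I.OrdConnected)
    (H : ℝ) (hH : H ≠ 0)
    (A B C : ℝ → Fin 3 → ℝ) (κ₁ κ₂ : ℝ → ℝ)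
    (hAsm : ContDiffOn ℝ (⊤ : ℕ∞) A I) (hBsm : ContDiffOn ℝ (⊤ : ℕ∞) B I)
    (hCsm : ContDiffOn ℝ (⊤ : ℕ∞) C I)
    (hκ₁sm : ContDiffOn ℝ (⊤ : ℕ∞) κ₁ I) (hκ₂sm : ContDiffOn ℝ (⊤ : ℕ∞) κ₂ I)
    (hAA : ∀ s ∈ I, ml (A s) (A s) = 0)
    (hBB : ∀ s ∈ I, ml (B s) (B s) = 0)
    (hAB : ∀ s ∈ I, ml (A s) (B s) = -1)
    (hAC : ∀ s ∈ I, ml (A s) (C s) = 0)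
    (hBC : ∀ s ∈ I, ml (B s) (C s) = 0)
    (hCC : ∀ s ∈ I, ml (C s) (C s) = 1)
    (hcross : ∀ s ∈ I, C s = lcross (A s) (B s))
    (hA' : ∀ s ∈ I, deriv A s = κ₁ s • A s + κ₂ s • C s)
    (hB' : ∀ s ∈ I, deriv B s = (-(κ₁ s)) • B s + H • C s)
    (hC' : ∀ s ∈ I, deriv C s = H • A s + κ₂ s • B s)
    (NL : ℝ → ℝ → Fin 3 → ℝ)
    (hNLdef : ∀ s t, NL s t = -C s - (t * H) • B s) :
    (∀ s ∈ I, ∀ t : ℝ, NL s t 2 = 0 ↔ C s 2 + t * H * B s 2 = 0) ∧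
    (∀ s ∈ I, ∀ t : ℝ, NL s t 2 = 0 →
      B s 2 ≠ 0 ∧ t = -(C s 2) / (H * B s 2) ∧
      deriv (fun u => NL s u 2) t = -(H * B s 2) ∧
      deriv (fun u => NL s u 2) t ≠ 0) ∧
    (∀ s ∈ I, B s 2 = 0 → ∀ t : ℝ, NL s t 2 ≠ 0) := by

  -- Key: if B₃ s = 0 then C₃ s ≠ 0
  have key : ∀ s ∈ I, B s 2 = 0 → C s 2 ≠ 0 := by
    intro s hs hB3 hC3
    have h1 := hBB s hs
    have h2 := hAB s hs
    have h3 := hBC s hs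
    have h4 := hCC s hs
    simp only [ml, hB3, hC3] at h1 h2 h3 h4
    -- h1 : -(B0²)+B1² = 0, h3 : -B0C0 + B1C1 = 0, h4 : -C0²+C1² = 1
    -- B ≠ 0 since ⟨A,B⟩ = -1
    have e : B s 0 * C s 0 = B s 1 * C s 1 := by linarith
    have hb : B s 0 ^ 2 = B s 1 ^ 2 := by nlinarith
    have e2 : B s 0 ^ 2 * C s 0 ^ 2 = B s 1 ^ 2 * C s 1 ^ 2 := by
      have := congrArg (fun x => x ^ 2) e
      simpa [mul_pow] using this
    have hb0 : B s 0 = 0 := by nlinarith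
    have hb1 : B s 1 = 0 := by nlinarith
    rw [hb0, hb1] at h2
    norm_num at h2
  have hNL2 : ∀ s t : ℝ, NL s t 2 = -(C s 2) - t * H * B s 2 := by
    intro s t
    rw [hNLdef]
    simp [mul_assoc]
  have hderiv : ∀ s t : ℝ, deriv (fun u => NL s u 2) t = -(H * B s 2) := by
    intro s t
    have : (fun u => NL s u 2) = fun u => -(C s 2) - u * (H * B s 2) := by
      funext u; rw [hNL2]; ring
    rw [this]
    have h : HasDerivAt (fun u : ℝ => -(C s 2) - u * (H * B s 2)) (-(H * B s 2)) t := by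
      simpa using ((hasDerivAt_id t).mul_const (H * B s 2)).const_sub (-(C s 2))
    exact h.deriv
  refine ⟨?_, ?_, ?_⟩
  · intro s hs t
    rw [hNL2]
    constructor <;> intro h <;> linarith
  · intro s hs t ht
    rw [hNL2] at ht
    have hB3 : B s 2 ≠ 0 := by
      intro hb
      exact key s hs hb (by linarith [ht, mul_eq_zero_of_right (t*H) hb])
    refine ⟨hB3, ?_, hderiv s t, ?_⟩
    · field_simp
      linarith
    · rw [hderiv s t]
      simp [hH, hB3]
  · intro s hs hB3 t
    rw [hNL2, hB3]
    simpa using key s hs hB3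
end
end

section
/- Let I ⊆ ℝ be an open interval, H a nonzero real number, and A, B, C : I → ℝ³ smooth maps with ⟨A,A⟩ = ⟨B,B⟩ = 0, ⟨A,B⟩ = −1, ⟨A,C⟩ = ⟨B,C⟩ = 0, ⟨C,C⟩ = 1, satisfying Frenet–Serret equations A' = κ₁·A + κ₂·C, B' = −κ₁·B + H·C, C' = H·A + κ₂·B for smooth functions κ₁, κ₂. Assume B₃(s) ≠ 0 for all s ∈ I, let γ : I → ℝ³ be smooth with γ' = A, and set c_L(s) := γ(s) − (C₃(s)/(H·B₃(s)))·B(s). Then c_L' = A + (−A₃/B₃ − κ₂/H + C₃²/B₃²)·B − (C₃/B₃)·C on I; in particular the third component of c_L' equals −κ₂·B₃/H, and at any s₀ ∈ I with κ₂(s₀) = 0 the third component of c_L''(s₀) equals −κ₂'(s₀)·B₃(s₀)/H. -/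
noncomputable section

/-- derivative formula for the singular curve
`c_L(s) = γ(s) − (C₃/(H·B₃))·B(s)` on a constant mean curvature `H` null scroll. -/
theorem stmt12
    (I : Set ℝ) (hIopen : IsOpen I) (hIconn : I.OrdConnected)
    (H : ℝ) (hH : H ≠ 0)
    (A B C : ℝ → Fin 3 → ℝ) (κ₁ κ₂ : ℝ → ℝ)
    (hAsm : ContDiffOn ℝ (⊤ : ℕ∞) A I) (hBsm : ContDiffOn ℝ (⊤ : ℕ∞) B I)
    (hCsm : ContDiffOn ℝ (⊤ : ℕ∞) C I)
    (hκ₁sm : ContDiffOn ℝ (⊤ : ℕ∞) κ₁ I) (hκ₂sm : ContDiffOn ℝ (⊤ : ℕ∞) κ₂ I)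
    (hAA : ∀ s ∈ I, ml (A s) (A s) = 0)
    (hBB : ∀ s ∈ I, ml (B s) (B s) = 0)
    (hAB : ∀ s ∈ I, ml (A s) (B s) = -1)
    (hAC : ∀ s ∈ I, ml (A s) (C s) = 0)
    (hBC : ∀ s ∈ I, ml (B s) (C s) = 0)
    (hCC : ∀ s ∈ I, ml (C s) (C s) = 1)
    (hA' : ∀ s ∈ I, deriv A s = κ₁ s • A s + κ₂ s • C s)
    (hB' : ∀ s ∈ I, deriv B s = (-(κ₁ s)) • B s + H • C s)
    (hC' : ∀ s ∈ I, deriv C s = H • A s + κ₂ s • B s)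
    (hB₃ : ∀ s ∈ I, B s 2 ≠ 0)
    (γ : ℝ → Fin 3 → ℝ)
    (hγsm : ContDiffOn ℝ (⊤ : ℕ∞) γ I)
    (hγ' : ∀ s ∈ I, deriv γ s = A s)
    (cL : ℝ → Fin 3 → ℝ)
    (hcLdef : ∀ s, cL s = γ s - (C s 2 / (H * B s 2)) • B s) :
    (∀ s ∈ I, deriv cL s =
      A s + (-(A s 2) / B s 2 - κ₂ s / H + (C s 2) ^ 2 / (B s 2) ^ 2) • B s
        + (-(C s 2 / B s 2)) • C s) ∧
    (∀ s ∈ I, deriv cL s 2 = -(κ₂ s * B s 2) / H) ∧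
    (∀ s₀ ∈ I, κ₂ s₀ = 0 →
      deriv (deriv cL) s₀ 2 = -(deriv κ₂ s₀ * B s₀ 2) / H) := by
  have hcL : cL = fun t => γ t - (C t 2 / (H * B t 2)) • B t := funext hcLdef
  -- has-deriv facts at any point of I
  have key : ∀ s ∈ I, HasDerivAt cL
      (A s + (-(A s 2) / B s 2 - κ₂ s / H + (C s 2) ^ 2 / (B s 2) ^ 2) • B s
        + (-(C s 2 / B s 2)) • C s) s := by
    intro s hs
    have hnhds : I ∈ nhds s := hIopen.mem_nhds hs
    have hBd : HasDerivAt B ((-(κ₁ s)) • B s + H • C s) s := by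
      have h := ((hBsm.contDiffAt hnhds).differentiableAt (by simp)).hasDerivAt
      rwa [hB' s hs] at h
    have hCd : HasDerivAt C (H • A s + κ₂ s • B s) s := by
      have h := ((hCsm.contDiffAt hnhds).differentiableAt (by simp)).hasDerivAt
      rwa [hC' s hs] at h
    have hγd : HasDerivAt γ (A s) s := by
      have h := ((hγsm.contDiffAt hnhds).differentiableAt (by simp)).hasDerivAt
      rwa [hγ' s hs] at h
    have hB3d : HasDerivAt (fun t => B t 2) (-(κ₁ s) * B s 2 + H * C s 2) s := by
      have h := (hasDerivAt_pi.1 hBd) 2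
      simpa using h
    have hC3d : HasDerivAt (fun t => C t 2) (H * A s 2 + κ₂ s * B s 2) s := by
      have h := (hasDerivAt_pi.1 hCd) 2
      simpa using h
    have hden : HasDerivAt (fun t => H * B t 2) (H * (-(κ₁ s) * B s 2 + H * C s 2)) s :=
      hB3d.const_mul H
    have hgd : HasDerivAt (fun t => C t 2 / (H * B t 2))
        (((H * A s 2 + κ₂ s * B s 2) * (H * B s 2)
          - C s 2 * (H * (-(κ₁ s) * B s 2 + H * C s 2))) / (H * B s 2) ^ 2) s :=
      hC3d.div hden (mul_ne_zero hH (hB₃ s hs))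
    have hsmul := hgd.smul hBd
    have hcLd := hγd.sub hsmul
    rw [show (γ - (fun t => C t 2 / (H * B t 2)) • B) = cL from by rw [hcL]; rfl] at hcLd
    refine hcLd.congr_deriv ?_
    have hb := hB₃ s hs
    funext i
    simp only [Pi.add_apply, Pi.sub_apply, Pi.smul_apply, smul_eq_mul]
    field_simp
    ring
  have part1 : ∀ s ∈ I, deriv cL s =
      A s + (-(A s 2) / B s 2 - κ₂ s / H + (C s 2) ^ 2 / (B s 2) ^ 2) • B s
        + (-(C s 2 / B s 2)) • C s := fun s hs => (key s hs).deriv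
  have part2 : ∀ s ∈ I, deriv cL s 2 = -(κ₂ s * B s 2) / H := by
    intro s hs
    rw [part1 s hs]
    have hb := hB₃ s hs
    simp only [Pi.add_apply, Pi.smul_apply, smul_eq_mul]
    field_simp
    ring
  refine ⟨part1, part2, ?_⟩
  intro s₀ hs₀ hκ0
  have hnhds : I ∈ nhds s₀ := hIopen.mem_nhds hs₀
  -- cL is smooth on I
  have hB3sm : ContDiffOn ℝ (⊤ : ℕ∞) (fun t => B t 2) I := contDiffOn_pi.1 hBsm 2
  have hC3sm : ContDiffOn ℝ (⊤ : ℕ∞) (fun t => C t 2) I := contDiffOn_pi.1 hCsm 2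
  have hgsm : ContDiffOn ℝ (⊤ : ℕ∞) (fun t => C t 2 / (H * B t 2)) I :=
    hC3sm.div (contDiffOn_const.mul hB3sm) (fun s hs => mul_ne_zero hH (hB₃ s hs))
  have hcLsm : ContDiffOn ℝ (⊤ : ℕ∞) cL I := by
    rw [hcL]; exact hγsm.sub (hgsm.smul hBsm)
  have hdsm : ContDiffOn ℝ (⊤ : ℕ∞) (deriv cL) I :=
    hcLsm.deriv_of_isOpen hIopen (by simp)
  have hdd : DifferentiableAt ℝ (deriv cL) s₀ :=
    (hdsm.contDiffAt hnhds).differentiableAt (by simp)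
  have hv : HasDerivAt (deriv cL) (deriv (deriv cL) s₀) s₀ := hdd.hasDerivAt
  have hv2 : HasDerivAt (fun s => deriv cL s 2) (deriv (deriv cL) s₀ 2) s₀ :=
    (hasDerivAt_pi.1 hv) 2
  -- transfer to ψ
  have hEq : (fun s => deriv cL s 2) =ᶠ[nhds s₀] (fun s => -(κ₂ s * B s 2) / H) :=
    Filter.eventuallyEq_of_mem hnhds (fun s hs => part2 s hs)
  have hψ : HasDerivAt (fun s => -(κ₂ s * B s 2) / H) (deriv (deriv cL) s₀ 2) s₀ :=
    hv2.congr_of_eventuallyEq hEq.symm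
  -- direct computation of ψ'
  have hκd : HasDerivAt κ₂ (deriv κ₂ s₀) s₀ :=
    ((hκ₂sm.contDiffAt hnhds).differentiableAt (by simp)).hasDerivAt
  have hBd : HasDerivAt B ((-(κ₁ s₀)) • B s₀ + H • C s₀) s₀ := by
    have h := ((hBsm.contDiffAt hnhds).differentiableAt (by simp)).hasDerivAt
    rwa [hB' s₀ hs₀] at h
  have hB3d : HasDerivAt (fun t => B t 2) (-(κ₁ s₀) * B s₀ 2 + H * C s₀ 2) s₀ := by
    have h := (hasDerivAt_pi.1 hBd) 2
    simpa using h
  have hψ' : HasDerivAt (fun s => -(κ₂ s * B s 2) / H)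
      (-(deriv κ₂ s₀ * B s₀ 2 + κ₂ s₀ * (-(κ₁ s₀) * B s₀ 2 + H * C s₀ 2)) / H) s₀ :=
    ((hκd.mul hB3d).neg).div_const H
  have := hψ.unique hψ'
  rw [this, hκ0]
  ring
end
end

section
/- Let I ⊆ ℝ be an open interval, H a nonzero real number, and A, B, C : I → ℝ³ smooth maps with ⟨A,A⟩ = ⟨B,B⟩ = 0, ⟨A,B⟩ = −1, ⟨A,C⟩ = ⟨B,C⟩ = 0, ⟨C,C⟩ = 1, satisfying the B-scroll Frenet–Serret equations A' = κ₂·C, B' = H·C, C' = H·A + κ₂·B for a smooth function κ₂. Define N_L : I × ℝ → ℝ³ by N_L(s,t) := −C(s) − t·H·B(s). Then ⟨N_L, N_L⟩ = 1 everywhere, and N_L satisfies componentwise the partial differential equation 2·∂ₜ∂ₛN_L + ∂ₜ(t²H²·∂ₜN_L) = 2H²·N_L on I × ℝ. -/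
noncomputable section

/-- the Gauss map `N_L(s,t) = −C(s) − tH·B(s)` of a constant mean
curvature `H` B-scroll takes values in de Sitter 2-space and satisfies the
eigenvalue equation `□N_L = 2H²N_L`, i.e.
`2·∂ₜ∂ₛN_L + ∂ₜ(t²H²·∂ₜN_L) = 2H²·N_L`. -/
theorem stmt13
    (I : Set ℝ) (hIopen : IsOpen I) (hIconn : I.OrdConnected)
    (H : ℝ) (hH : H ≠ 0)
    (A B C : ℝ → Fin 3 → ℝ) (κ₂ : ℝ → ℝ)
    (hAsm : ContDiffOn ℝ (⊤ : ℕ∞) A I) (hBsm : ContDiffOn ℝ (⊤ : ℕ∞) B I)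
    (hCsm : ContDiffOn ℝ (⊤ : ℕ∞) C I) (hκsm : ContDiffOn ℝ (⊤ : ℕ∞) κ₂ I)
    (hAA : ∀ s ∈ I, ml (A s) (A s) = 0)
    (hBB : ∀ s ∈ I, ml (B s) (B s) = 0)
    (hAB : ∀ s ∈ I, ml (A s) (B s) = -1)
    (hAC : ∀ s ∈ I, ml (A s) (C s) = 0)
    (hBC : ∀ s ∈ I, ml (B s) (C s) = 0)
    (hCC : ∀ s ∈ I, ml (C s) (C s) = 1)
    (hA' : ∀ s ∈ I, deriv A s = κ₂ s • C s)
    (hB' : ∀ s ∈ I, deriv B s = H • C s)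
    (hC' : ∀ s ∈ I, deriv C s = H • A s + κ₂ s • B s)
    (NL : ℝ → ℝ → Fin 3 → ℝ)
    (hNLdef : ∀ s t, NL s t = -C s - (t * H) • B s) :
    (∀ s ∈ I, ∀ t : ℝ, ml (NL s t) (NL s t) = 1) ∧
    (∀ s ∈ I, ∀ t : ℝ, ∀ i : Fin 3,
      2 * deriv (fun u => deriv (fun v => NL v u i) s) t
        + deriv (fun u => u ^ 2 * H ^ 2 * deriv (fun v => NL s v i) u) t
      = 2 * H ^ 2 * NL s t i) := by

  constructor
  · intro s hs t
    have h1 := hCC s hs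
    have h2 := hBC s hs
    have h3 := hBB s hs
    simp only [ml] at h1 h2 h3 ⊢
    simp only [hNLdef, Pi.sub_apply, Pi.neg_apply, Pi.smul_apply, smul_eq_mul]
    linear_combination h1 + 2 * t * H * h2 + t ^ 2 * H ^ 2 * h3
  · intro s hs t i
    have hBd : DifferentiableAt ℝ B s :=
      ((hBsm.contDiffAt (hIopen.mem_nhds hs)).differentiableAt (by norm_num))
    have hCd : DifferentiableAt ℝ C s :=
      ((hCsm.contDiffAt (hIopen.mem_nhds hs)).differentiableAt (by norm_num))
    have hasB : HasDerivAt B (H • C s) s := by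
      have h := hBd.hasDerivAt; rwa [hB' s hs] at h
    have hasC : HasDerivAt C (H • A s + κ₂ s • B s) s := by
      have h := hCd.hasDerivAt; rwa [hC' s hs] at h
    have hasBi : HasDerivAt (fun v => B v i) (H * C s i) s := by
      have h := hasDerivAt_pi.1 hasB i
      simpa [Pi.smul_apply, smul_eq_mul] using h
    have hasCi : HasDerivAt (fun v => C v i) (H * A s i + κ₂ s * B s i) s := by
      have h := hasDerivAt_pi.1 hasC i
      simpa [Pi.add_apply, Pi.smul_apply, smul_eq_mul] using h
    have hinner : ∀ u : ℝ, deriv (fun v => NL v u i) s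
        = -(H * A s i + κ₂ s * B s i) - u * (H * (H * C s i)) := by
      intro u
      have heq : (fun v => NL v u i) = fun v => -C v i - (u * H) * B v i := by
        funext v
        rw [hNLdef]
        simp [Pi.sub_apply, Pi.neg_apply, Pi.smul_apply, smul_eq_mul]
      have hd : HasDerivAt (fun v => -C v i - (u * H) * B v i)
          (-(H * A s i + κ₂ s * B s i) - (u * H) * (H * C s i)) s :=
        hasCi.neg.sub (hasBi.const_mul (u * H))
      rw [heq, hd.deriv]; ring
    have houter1 : deriv (fun u => deriv (fun v => NL v u i) s) t
        = -(H * (H * C s i)) := by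
      have heq : (fun u => deriv (fun v => NL v u i) s)
          = fun u => -(H * A s i + κ₂ s * B s i) - u * (H * (H * C s i)) :=
        funext hinner
      rw [heq]
      have hd : HasDerivAt
          (fun u : ℝ => -(H * A s i + κ₂ s * B s i) - u * (H * (H * C s i)))
          (-(1 * (H * (H * C s i)))) t :=
        ((hasDerivAt_id t).mul_const _).const_sub _
      rw [hd.deriv]; ring
    have hinner2 : ∀ u : ℝ, deriv (fun v => NL s v i) u = -(H * B s i) := by
      intro u
      have heq : (fun v => NL s v i) = fun v => -C s i - v * (H * B s i) := by
        funext v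
        rw [hNLdef]
        simp [Pi.sub_apply, Pi.neg_apply, Pi.smul_apply, smul_eq_mul]; ring
      have hd : HasDerivAt (fun v : ℝ => -C s i - v * (H * B s i))
          (-(1 * (H * B s i))) u :=
        ((hasDerivAt_id u).mul_const _).const_sub _
      rw [heq, hd.deriv]; ring
    have houter2 : deriv (fun u => u ^ 2 * H ^ 2 * deriv (fun v => NL s v i) u) t
        = 2 * t * (H ^ 2 * -(H * B s i)) := by
      have heq : (fun u => u ^ 2 * H ^ 2 * deriv (fun v => NL s v i) u)
          = fun u : ℝ => u ^ 2 * (H ^ 2 * -(H * B s i)) := by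
        funext u; rw [hinner2 u]; ring
      rw [heq]
      have hd : HasDerivAt (fun u : ℝ => u ^ 2 * (H ^ 2 * -(H * B s i)))
          ((2 : ℕ) * t ^ 1 * (H ^ 2 * -(H * B s i))) t :=
        (hasDerivAt_pow 2 t).mul_const _
      rw [hd.deriv]; push_cast; ring
    rw [houter1, houter2, hNLdef]
    simp only [Pi.sub_apply, Pi.neg_apply, Pi.smul_apply, smul_eq_mul]
    ring
end
end

section
/- Let A, B, C ∈ ℝ³ satisfy ⟨A,A⟩ = ⟨B,B⟩ = 0, ⟨A,B⟩ = −1, ⟨A,C⟩ = ⟨B,C⟩ = 0, ⟨C,C⟩ = 1, and suppose B₃ ≠ 0. Let H ≠ 0 and κ₂ be real numbers, and set v := A + (−A₃/B₃ − κ₂/H + C₃²/B₃²)·B − (C₃/B₃)·C. Then the first two components of v both vanish (i.e. v is a scalar multiple of e₃ = (0,0,1)) if and only if (κ₂/H)·B₃² = 1 and 2·A₃·B₃ + 1 − C₃² = 0. -/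
noncomputable section

/-- the velocity of the singular curve is parallel to `e₃`
iff `(κ₂/H)·B₃² = 1` and `2A₃B₃ + 1 − C₃² = 0`. -/
theorem stmt14
    (A B C : Fin 3 → ℝ)
    (hAA : ml A A = 0) (hBB : ml B B = 0) (hAB : ml A B = -1)
    (hAC : ml A C = 0) (hBC : ml B C = 0) (hCC : ml C C = 1)
    (hB₃ : B 2 ≠ 0)
    (H κ₂ : ℝ) (hH : H ≠ 0)
    (v : Fin 3 → ℝ)
    (hvdef : v = A + (-(A 2) / B 2 - κ₂ / H + (C 2) ^ 2 / (B 2) ^ 2) • B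
      + (-(C 2 / B 2)) • C) :
    (v 0 = 0 ∧ v 1 = 0) ↔
      (κ₂ / H * (B 2) ^ 2 = 1 ∧ 2 * A 2 * B 2 + 1 - (C 2) ^ 2 = 0) := by
  simp only [ml] at hAA hBB hAB hAC hBC hCC
  set k := κ₂ / H with hk
  set s := -(A 2) / B 2 - k + (C 2) ^ 2 / (B 2) ^ 2 with hs
  set t := -(C 2 / B 2) with ht
  have hv0 : v 0 = A 0 + s * B 0 + t * C 0 := by rw [hvdef]; simp
  have hv1 : v 1 = A 1 + s * B 1 + t * C 1 := by rw [hvdef]; simp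
  have hv2 : v 2 = A 2 + s * B 2 + t * C 2 := by rw [hvdef]; simp
  have hsb : s * B 2 ^ 2 = C 2 ^ 2 - A 2 * B 2 - k * B 2 ^ 2 := by
    rw [hs]; field_simp; ring
  have htb : t * B 2 = -C 2 := by rw [ht]; field_simp
  have E1 : -(v 0 * B 0) + v 1 * B 1 + v 2 * B 2 = -1 := by
    rw [hv0, hv1, hv2]; linear_combination hAB + s * hBB + t * hBC
  have E2 : -(v 0 * C 0) + v 1 * C 1 + v 2 * C 2 = t := by
    rw [hv0, hv1, hv2]; linear_combination hAC + s * hBC + t * hCC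
  have E3 : -(v 0 * A 0) + v 1 * A 1 + v 2 * A 2 = -s := by
    rw [hv0, hv1, hv2]; linear_combination hAA + s * hAB + t * hAC
  have E4 : -(v 0 * v 0) + v 1 * v 1 + v 2 * v 2 = -2 * s + t ^ 2 := by
    rw [hv0, hv1, hv2]
    linear_combination hAA + 2 * s * hAB + 2 * t * hAC + s ^ 2 * hBB
      + 2 * s * t * hBC + t ^ 2 * hCC
  have e6 : v 2 * B 2 = -(k * B 2 ^ 2) := by
    linear_combination B 2 * hv2 + hsb + C 2 * htb
  constructor
  · rintro ⟨h0, h1⟩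
    rw [h0, h1] at E1 E4
    have e5 : v 2 * B 2 = -1 := by linear_combination E1
    have key1 : k * B 2 ^ 2 = 1 := by linear_combination e6 - e5
    refine ⟨key1, ?_⟩
    linear_combination (-(B 2 ^ 2)) * E4 + (v 2 * B 2 - 1) * e5 + 2 * hsb
      - (t * B 2 - C 2) * htb - 2 * key1
  · rintro ⟨g1, g2⟩
    have e5 : v 2 * B 2 = -1 := by linear_combination e6 - g1
    have rB : -(v 0 * B 0) + v 1 * B 1 = 0 := by linear_combination E1 - e5
    have rC : -(v 0 * C 0) + v 1 * C 1 = 0 := by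
      have h : B 2 * (-(v 0 * C 0) + v 1 * C 1) = 0 := by
        linear_combination B 2 * E2 - C 2 * e5 + htb
      exact (mul_eq_zero.mp h).resolve_left hB₃
    have rA : -(v 0 * A 0) + v 1 * A 1 = 0 := by
      have h : B 2 ^ 2 * (-(v 0 * A 0) + v 1 * A 1) = 0 := by
        linear_combination B 2 ^ 2 * E3 - A 2 * B 2 * e5 - hsb + g1 + g2
      exact (mul_eq_zero.mp h).resolve_left (pow_ne_zero 2 hB₃)
    have rsq : -(v 0 * v 0) + v 1 * v 1 = 0 := by
      have h : B 2 ^ 2 * (-(v 0 * v 0) + v 1 * v 1) = 0 := by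
        linear_combination B 2 ^ 2 * E4 - (v 2 * B 2 - 1) * e5 - 2 * hsb
          + (t * B 2 - C 2) * htb + 2 * g1 + g2
      exact (mul_eq_zero.mp h).resolve_left (pow_ne_zero 2 hB₃)
    have hp : v 0 = 0 := by
      by_contra hp
      have f1 : v 0 ^ 2 * (A 1 * B 1 - A 0 * B 0) = 0 := by
        linear_combination (v 1 * B 1) * rA + (v 0 * A 0) * rB - (A 1 * B 1) * rsq
      have f2 : v 0 ^ 2 * (A 1 ^ 2 - A 0 ^ 2) = 0 := by
        linear_combination (v 1 * A 1 + v 0 * A 0) * rA - (A 1 ^ 2) * rsq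
      have gAB : v 0 ^ 2 * (A 2 * B 2 + 1) = 0 := by
        linear_combination v 0 ^ 2 * hAB - f1
      have gAA : v 0 ^ 2 * A 2 ^ 2 = 0 := by
        linear_combination v 0 ^ 2 * hAA - f2
      have hp2 : v 0 ^ 2 ≠ 0 := pow_ne_zero 2 hp
      have hA2 : A 2 = 0 := by
        have := (mul_eq_zero.mp gAA).resolve_left hp2
        exact pow_eq_zero_iff two_ne_zero |>.mp this
      have := (mul_eq_zero.mp gAB).resolve_left hp2
      rw [hA2] at this
      simp at this
    refine ⟨hp, ?_⟩
    have : v 1 * v 1 = 0 := by linear_combination rsq + v 0 * hp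
    exact (mul_self_eq_zero).mp this
end
end

section
/- Let I ⊆ ℝ be an open interval, H a nonzero real number, and B : I → ℝ³ a smooth map with ⟨B,B⟩ = 0, ⟨B',B'⟩ = H², and H·det(B, B', B'') > 0 on I. Set κ₂ := −⟨B'',B''⟩/(2H³). Then det(B, B', B'') = H³ identically on I, and B''' = H·κ₂'·B + 2H·κ₂·B' on I. -/
noncomputable section

/-- Derivative of an `ml`-product of two vector-valued functions. -/
lemma hasDerivAt_ml_s17 {u v : ℝ → Fin 3 → ℝ} {u' v' : Fin 3 → ℝ} {s : ℝ}
    (hu : HasDerivAt u u' s) (hv : HasDerivAt v v' s) :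
    HasDerivAt (fun t => ml (u t) (v t)) (ml u' (v s) + ml (u s) v') s := by
  have hu0 := hasDerivAt_pi.1 hu 0
  have hu1 := hasDerivAt_pi.1 hu 1
  have hu2 := hasDerivAt_pi.1 hu 2
  have hv0 := hasDerivAt_pi.1 hv 0
  have hv1 := hasDerivAt_pi.1 hv 1
  have hv2 := hasDerivAt_pi.1 hv 2
  have : HasDerivAt (fun t => -(u t 0 * v t 0) + u t 1 * v t 1 + u t 2 * v t 2)
      (-(u' 0 * v s 0 + u s 0 * v' 0) + (u' 1 * v s 1 + u s 1 * v' 1)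
        + (u' 2 * v s 2 + u s 2 * v' 2)) s :=
    (((hu0.mul hv0).neg.add (hu1.mul hv1)).add (hu2.mul hv2))
  have heq : (-(u' 0 * v s 0 + u s 0 * v' 0) + (u' 1 * v s 1 + u s 1 * v' 1)
      + (u' 2 * v s 2 + u s 2 * v' 2)) = ml u' (v s) + ml (u s) v' := by
    simp [ml]; ring
  exact heq ▸ this

/-- Pointwise linear-algebra core: Cramer-style resolution. -/
lemma key_alg (H : ℝ) (hH : H ≠ 0) (b c d f : Fin 3 → ℝ)
    (P1 : ml b b = 0) (P2 : ml b c = 0) (P3 : ml c c = H ^ 2)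
    (P4 : ml b d = -H ^ 2) (P5 : ml c d = 0) (P6 : ml b f = 0)
    (P7 : ml c f = -(ml d d)) (P8 : det3 b c d = H ^ 3) :
    ∀ i, H ^ 2 * f i + ml d f * b i + ml d d * c i = 0 := by
  have h3 : (H : ℝ) ^ 3 ≠ 0 := pow_ne_zero _ hH
  simp only [ml, det3] at P1 P2 P3 P4 P5 P6 P7 P8 ⊢
  intro i
  have cancel : ∀ x : ℝ, H ^ 3 * x = 0 → x = 0 := fun x hx =>
    (mul_eq_zero.mp hx).resolve_left h3
  fin_cases i
  · show H ^ 2 * f 0 + (-(d 0 * f 0) + d 1 * f 1 + d 2 * f 2) * b 0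
      + (-(d 0 * d 0) + d 1 * d 1 + d 2 * d 2) * c 0 = 0
    refine cancel _ ?_
    linear_combination
        (-(c 1 * d 2 - c 2 * d 1) * (-(d 0 * f 0) + d 1 * f 1 + d 2 * f 2)) * P1 +
        (-(c 1 * d 2 - c 2 * d 1) * (-(d 0 * d 0) + d 1 * d 1 + d 2 * d 2) - (-(b 1 * d 2) + b 2 * d 1) * (-(d 0 * f 0) + d 1 * f 1 + d 2 * f 2)) * P2 +
        (-(-(b 1 * d 2) + b 2 * d 1) * (-(d 0 * d 0) + d 1 * d 1 + d 2 * d 2)) * P3 +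
        (-(b 1 * c 2 - b 2 * c 1) * (-(d 0 * f 0) + d 1 * f 1 + d 2 * f 2)) * P4 +
        (-(b 1 * c 2 - b 2 * c 1) * (-(d 0 * d 0) + d 1 * d 1 + d 2 * d 2)) * P5 +
        (-(c 1 * d 2 - c 2 * d 1) * H ^ 2) * P6 +
        (-(-(b 1 * d 2) + b 2 * d 1) * H ^ 2) * P7 +
        (-(H ^ 2 * f 0 + (-(d 0 * f 0) + d 1 * f 1 + d 2 * f 2) * b 0 + (-(d 0 * d 0) + d 1 * d 1 + d 2 * d 2) * c 0)) * P8
  · show H ^ 2 * f 1 + (-(d 0 * f 0) + d 1 * f 1 + d 2 * f 2) * b 1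
      + (-(d 0 * d 0) + d 1 * d 1 + d 2 * d 2) * c 1 = 0
    refine cancel _ ?_
    linear_combination
        (-(c 0 * d 2 - c 2 * d 0) * (-(d 0 * f 0) + d 1 * f 1 + d 2 * f 2)) * P1 +
        (-(c 0 * d 2 - c 2 * d 0) * (-(d 0 * d 0) + d 1 * d 1 + d 2 * d 2) - (-(b 0 * d 2) + b 2 * d 0) * (-(d 0 * f 0) + d 1 * f 1 + d 2 * f 2)) * P2 +
        (-(-(b 0 * d 2) + b 2 * d 0) * (-(d 0 * d 0) + d 1 * d 1 + d 2 * d 2)) * P3 +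
        (-(b 0 * c 2 - b 2 * c 0) * (-(d 0 * f 0) + d 1 * f 1 + d 2 * f 2)) * P4 +
        (-(b 0 * c 2 - b 2 * c 0) * (-(d 0 * d 0) + d 1 * d 1 + d 2 * d 2)) * P5 +
        (-(c 0 * d 2 - c 2 * d 0) * H ^ 2) * P6 +
        (-(-(b 0 * d 2) + b 2 * d 0) * H ^ 2) * P7 +
        (-(H ^ 2 * f 1 + (-(d 0 * f 0) + d 1 * f 1 + d 2 * f 2) * b 1 + (-(d 0 * d 0) + d 1 * d 1 + d 2 * d 2) * c 1)) * P8
  · show H ^ 2 * f 2 + (-(d 0 * f 0) + d 1 * f 1 + d 2 * f 2) * b 2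
      + (-(d 0 * d 0) + d 1 * d 1 + d 2 * d 2) * c 2 = 0
    refine cancel _ ?_
    linear_combination
        (-(-(c 0 * d 1) + c 1 * d 0) * (-(d 0 * f 0) + d 1 * f 1 + d 2 * f 2)) * P1 +
        (-(-(c 0 * d 1) + c 1 * d 0) * (-(d 0 * d 0) + d 1 * d 1 + d 2 * d 2) - (b 0 * d 1 - b 1 * d 0) * (-(d 0 * f 0) + d 1 * f 1 + d 2 * f 2)) * P2 +
        (-(b 0 * d 1 - b 1 * d 0) * (-(d 0 * d 0) + d 1 * d 1 + d 2 * d 2)) * P3 +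
        (-(-(b 0 * c 1) + b 1 * c 0) * (-(d 0 * f 0) + d 1 * f 1 + d 2 * f 2)) * P4 +
        (-(-(b 0 * c 1) + b 1 * c 0) * (-(d 0 * d 0) + d 1 * d 1 + d 2 * d 2)) * P5 +
        (-(-(c 0 * d 1) + c 1 * d 0) * H ^ 2) * P6 +
        (-(b 0 * d 1 - b 1 * d 0) * H ^ 2) * P7 +
        (-(H ^ 2 * f 2 + (-(d 0 * f 0) + d 1 * f 1 + d 2 * f 2) * b 2 + (-(d 0 * d 0) + d 1 * d 1 + d 2 * d 2) * c 2)) * P8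

/-- for a lightlike `B` with `⟨B',B'⟩ = H²` and
`H·det(B,B',B'') > 0`, one has `det(B,B',B'') = H³` and
`B''' = Hκ₂'·B + 2Hκ₂·B'` with `κ₂ = −⟨B'',B''⟩/(2H³)`. -/
theorem stmt17
    (I : Set ℝ) (hIopen : IsOpen I) (hIconn : I.OrdConnected)
    (H : ℝ) (hH : H ≠ 0)
    (B : ℝ → Fin 3 → ℝ)
    (hBsm : ContDiffOn ℝ (⊤ : ℕ∞) B I)
    (hBB : ∀ s ∈ I, ml (B s) (B s) = 0)
    (hB'B' : ∀ s ∈ I, ml (deriv B s) (deriv B s) = H ^ 2)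
    (hdet : ∀ s ∈ I, 0 < H * det3 (B s) (deriv B s) (deriv (deriv B) s))
    (κ₂ : ℝ → ℝ)
    (hκdef : ∀ s, κ₂ s = -(ml (deriv (deriv B) s) (deriv (deriv B) s)) / (2 * H ^ 3)) :
    ∀ s ∈ I,
      det3 (B s) (deriv B s) (deriv (deriv B) s) = H ^ 3 ∧
      deriv (deriv (deriv B)) s
        = (H * deriv κ₂ s) • B s + (2 * H * κ₂ s) • deriv B s := by
  -- notation
  set B1 := deriv B with hB1
  set B2 := deriv B1 with hB2
  set B3 := deriv B2 with hB3
  have hB1sm : ContDiffOn ℝ (⊤ : ℕ∞) B1 I := hBsm.deriv_of_isOpen hIopen (by simp)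
  have hB2sm : ContDiffOn ℝ (⊤ : ℕ∞) B2 I := hB1sm.deriv_of_isOpen hIopen (by simp)
  have hDB : ∀ s ∈ I, HasDerivAt B (B1 s) s := fun s hs =>
    ((hBsm.differentiableOn (by simp)).differentiableAt (hIopen.mem_nhds hs)).hasDerivAt
  have hDB1 : ∀ s ∈ I, HasDerivAt B1 (B2 s) s := fun s hs =>
    ((hB1sm.differentiableOn (by simp)).differentiableAt (hIopen.mem_nhds hs)).hasDerivAt
  have hDB2 : ∀ s ∈ I, HasDerivAt B2 (B3 s) s := fun s hs =>
    ((hB2sm.differentiableOn (by simp)).differentiableAt (hIopen.mem_nhds hs)).hasDerivAt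
  -- generic "constant on I ⇒ derivative zero" principle
  have hconst : ∀ (g : ℝ → ℝ) (G : ℝ → ℝ) (c : ℝ), (∀ s ∈ I, HasDerivAt g (G s) s) →
      (∀ s ∈ I, g s = c) → ∀ s ∈ I, G s = 0 := by
    intro g G c hg hgc s hs
    have h0 : HasDerivAt g 0 s := by
      have : g =ᶠ[nhds s] fun _ => c :=
        Filter.eventuallyEq_of_mem (hIopen.mem_nhds hs) (fun t ht => hgc t ht)
      exact (hasDerivAt_const s c).congr_of_eventuallyEq this
    exact (hg s hs).unique h0
  -- derived identities
  have d1 : ∀ s ∈ I, ml (B s) (B1 s) = 0 := by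
    have := hconst (fun t => ml (B t) (B t))
      (fun s => ml (B1 s) (B s) + ml (B s) (B1 s)) 0
      (fun s hs => hasDerivAt_ml_s17 (hDB s hs) (hDB s hs)) hBB
    intro s hs
    have h : ml (B1 s) (B s) + ml (B s) (B1 s) = 0 := this s hs
    rw [ml_comm (B1 s)] at h
    linarith
  have d2 : ∀ s ∈ I, ml (B1 s) (B2 s) = 0 := by
    have := hconst (fun t => ml (B1 t) (B1 t))
      (fun s => ml (B2 s) (B1 s) + ml (B1 s) (B2 s)) (H ^ 2)
      (fun s hs => hasDerivAt_ml_s17 (hDB1 s hs) (hDB1 s hs)) hB'B'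
    intro s hs
    have h : ml (B2 s) (B1 s) + ml (B1 s) (B2 s) = 0 := this s hs
    rw [ml_comm (B2 s)] at h
    linarith
  have d3 : ∀ s ∈ I, ml (B s) (B2 s) = -H ^ 2 := by
    have := hconst (fun t => ml (B t) (B1 t))
      (fun s => ml (B1 s) (B1 s) + ml (B s) (B2 s)) 0
      (fun s hs => hasDerivAt_ml_s17 (hDB s hs) (hDB1 s hs)) d1
    intro s hs
    have h : ml (B1 s) (B1 s) + ml (B s) (B2 s) = 0 := this s hs
    have h2 := hB'B' s hs
    linarith
  have d4 : ∀ s ∈ I, ml (B s) (B3 s) = 0 := by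
    have := hconst (fun t => ml (B t) (B2 t))
      (fun s => ml (B1 s) (B2 s) + ml (B s) (B3 s)) (-H ^ 2)
      (fun s hs => hasDerivAt_ml_s17 (hDB s hs) (hDB2 s hs)) d3
    intro s hs
    have h : ml (B1 s) (B2 s) + ml (B s) (B3 s) = 0 := this s hs
    have h2 := d2 s hs
    linarith
  have d5 : ∀ s ∈ I, ml (B1 s) (B3 s) = -(ml (B2 s) (B2 s)) := by
    have := hconst (fun t => ml (B1 t) (B2 t))
      (fun s => ml (B2 s) (B2 s) + ml (B1 s) (B3 s)) 0
      (fun s hs => hasDerivAt_ml_s17 (hDB1 s hs) (hDB2 s hs)) d2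
    intro s hs
    have h : ml (B2 s) (B2 s) + ml (B1 s) (B3 s) = 0 := this s hs
    linarith
  -- determinant equals H³
  have hdetval : ∀ s ∈ I, det3 (B s) (B1 s) (B2 s) = H ^ 3 := by
    intro s hs
    have hsq : det3 (B s) (B1 s) (B2 s) ^ 2 = H ^ 6 := by
      have expand : det3 (B s) (B1 s) (B2 s) ^ 2 =
          -(ml (B s) (B s) * (ml (B1 s) (B1 s) * ml (B2 s) (B2 s) - ml (B1 s) (B2 s) ^ 2)
            - ml (B s) (B1 s) * (ml (B s) (B1 s) * ml (B2 s) (B2 s)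
              - ml (B1 s) (B2 s) * ml (B s) (B2 s))
            + ml (B s) (B2 s) * (ml (B s) (B1 s) * ml (B1 s) (B2 s)
              - ml (B1 s) (B1 s) * ml (B s) (B2 s))) := by
        simp only [ml, det3]; ring
      rw [hBB s hs, hB'B' s hs, d1 s hs, d2 s hs, d3 s hs] at expand
      rw [expand]; ring
    have hfac : (det3 (B s) (B1 s) (B2 s) - H ^ 3) * (det3 (B s) (B1 s) (B2 s) + H ^ 3) = 0 := by
      linear_combination hsq
    rcases mul_eq_zero.mp hfac with h | h
    · linarith
    · exfalso
      have hpos := hdet s hs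
      have hH2 : 0 < H ^ 2 := by positivity
      have : det3 (B s) (B1 s) (B2 s) = -H ^ 3 := by linarith
      rw [this] at hpos
      nlinarith
  intro s hs
  refine ⟨hdetval s hs, ?_⟩
  -- the vanishing combination
  have hv := key_alg H hH (B s) (B1 s) (B2 s) (B3 s)
    (hBB s hs) (d1 s hs) (hB'B' s hs) (d3 s hs) (d2 s hs) (d4 s hs) (d5 s hs) (hdetval s hs)
  -- derivative of κ₂
  have hκfun : κ₂ = fun t => -(ml (B2 t) (B2 t)) / (2 * H ^ 3) := funext hκdef
  have haD : HasDerivAt (fun t => ml (B2 t) (B2 t))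
      (ml (B3 s) (B2 s) + ml (B2 s) (B3 s)) s :=
    hasDerivAt_ml_s17 (hDB2 s hs) (hDB2 s hs)
  have hκD : HasDerivAt κ₂ (-(ml (B3 s) (B2 s) + ml (B2 s) (B3 s)) / (2 * H ^ 3)) s := by
    rw [hκfun]
    exact haD.neg.div_const (2 * H ^ 3)
  have hκ' : deriv κ₂ s = -(2 * ml (B2 s) (B3 s)) / (2 * H ^ 3) := by
    rw [hκD.deriv, ml_comm (B3 s)]; ring_nf
  -- conclude
  funext i
  have hvi := hv i
  have hRHS : ((H * deriv κ₂ s) • B s + (2 * H * κ₂ s) • B1 s) i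
      = (H * deriv κ₂ s) * B s i + (2 * H * κ₂ s) * B1 s i := by
    simp [Pi.add_apply, Pi.smul_apply, smul_eq_mul]
  rw [hRHS, hκ', hκdef s]
  have c1 : H * (-(2 * ml (B2 s) (B3 s)) / (2 * H ^ 3)) = -(ml (B2 s) (B3 s)) / H ^ 2 := by
    field_simp
  have c2 : 2 * H * (-(ml (B2 s) (B2 s)) / (2 * H ^ 3)) = -(ml (B2 s) (B2 s)) / H ^ 2 := by
    field_simp
  rw [c1, c2]
  have hH2 : (H : ℝ) ^ 2 ≠ 0 := pow_ne_zero _ hH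
  field_simp
  linear_combination hvi
end
end

section
/- Let I ⊆ ℝ be an open interval, H a nonzero real number, and h : I → ℝ a smooth function with h'(s) ≠ 0 for all s ∈ I. Let γ : I → ℝ³ be smooth with γ'(s) = (H/(2h'(s)))·(−1 − h(s)², 1 − h(s)², 2h(s)), and let n : I → ℝ³ be a smooth map with ⟨n,n⟩ = 0, ⟨n,γ'⟩ = −1, and ⟨n,γ''⟩ = 0 on I. Then the lightlike curvature κ_γ := ⟨(γ''/H)', n⟩ of γ satisfies κ_γ = S(h)/H on I, where S(h) is the Schwarzian derivative of h. -/
noncomputable section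
open Topology Filter

theorem key_alg_s18 (H hh u u1 u2 a b c : ℝ) (hu : u ≠ 0)
    (q1 : H*(a*(1+hh^2) + b*(1-hh^2) + 2*hh*c) + 2*u = 0)
    (q2 : -u1*(a*(1+hh^2) + b*(1-hh^2) + 2*hh*c) + 2*u^2*(hh*(a-b) + c) = 0)
    (q3 : -a^2 + b^2 + c^2 = 0) :
    -(((2*H*u1^2 - H*u*u2)*(-1-hh^2) + 2*H*hh*u1*u^2 - 2*H*u^4)*a)
      + ((2*H*u1^2 - H*u*u2)*(1-hh^2) + 2*H*hh*u1*u^2 - 2*H*u^4)*b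
      + ((2*H*u1^2 - H*u*u2)*(2*hh) - 2*H*u1*u^2)*c
     = 2*u^2*u2 - 3*u*u1^2 := by
  have hM' : (2*u) * (H*u*(hh*(a-b)+c) + u1) = 0 := by linear_combination H*q2 + u1*q1
  have hM : H*u*(hh*(a-b)+c) + u1 = 0 :=
    (mul_eq_zero.mp hM').resolve_left (by simpa using hu)
  have hq : 2*H*u^3*(a-b) + u1^2 = 0 := by
    linear_combination (H^2*u^2)*q3 + 2*u1*hM - (H*u*(hh*(a-b)+c) + u1)*hM + (H*u^2*(a-b))*q1
  linear_combination (2*u1^2 - u*u2)*q1 - 2*u*u1*hM + u*hq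

def Afun (H : ℝ) (h : ℝ → ℝ) (t : ℝ) : ℝ := H / (2 * deriv h t)
def A1fun (H : ℝ) (h : ℝ → ℝ) (t : ℝ) : ℝ :=
  -(H * deriv (deriv h) t) / (2 * (deriv h t)^2)
def A2fun (H : ℝ) (h : ℝ → ℝ) (t : ℝ) : ℝ :=
  (2*H*(deriv (deriv h) t)^2 - H*(deriv h t)*(deriv (deriv (deriv h)) t)) / (2*(deriv h t)^3)

def G2fun (H : ℝ) (h : ℝ → ℝ) (t : ℝ) : Fin 3 → ℝ :=
  ![A1fun H h t * (-1 - h t ^ 2) + Afun H h t * (-(2 * h t * deriv h t)),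
    A1fun H h t * (1 - h t ^ 2) + Afun H h t * (-(2 * h t * deriv h t)),
    A1fun H h t * (2 * h t) + Afun H h t * (2 * deriv h t)]

def G3fun (H : ℝ) (h : ℝ → ℝ) (t : ℝ) : Fin 3 → ℝ :=
  ![A2fun H h t * (-1 - h t ^ 2) + 2 * (A1fun H h t * (-(2 * h t * deriv h t)))
      + Afun H h t * (-(2 * ((deriv h t)^2 + h t * deriv (deriv h) t))),
    A2fun H h t * (1 - h t ^ 2) + 2 * (A1fun H h t * (-(2 * h t * deriv h t)))
      + Afun H h t * (-(2 * ((deriv h t)^2 + h t * deriv (deriv h) t))),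
    A2fun H h t * (2 * h t) + 2 * (A1fun H h t * (2 * deriv h t))
      + Afun H h t * (2 * deriv (deriv h) t)]

theorem hasDerivAt_Afun (H : ℝ) (h : ℝ → ℝ) (t : ℝ) (hu : deriv h t ≠ 0)
    (hd2 : HasDerivAt (deriv h) (deriv (deriv h) t) t) :
    HasDerivAt (Afun H h) (A1fun H h t) t := by
  have h2 : (2 : ℝ) * deriv h t ≠ 0 := by simpa using hu
  have := (hasDerivAt_const t H).div (hd2.const_mul 2) h2
  refine HasDerivAt.congr_deriv this ?_
  unfold A1fun; ring

theorem hasDerivAt_A1fun (H : ℝ) (h : ℝ → ℝ) (t : ℝ) (hu : deriv h t ≠ 0)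
    (hd2 : HasDerivAt (deriv h) (deriv (deriv h) t) t)
    (hd3 : HasDerivAt (deriv (deriv h)) (deriv (deriv (deriv h)) t) t) :
    HasDerivAt (A1fun H h) (A2fun H h t) t := by
  have h2 : (2 : ℝ) * (deriv h t)^2 ≠ 0 := by simpa using hu
  have H1 := ((hd3.const_mul H).neg).div ((hd2.pow 2).const_mul 2) h2
  refine HasDerivAt.congr_deriv (HasDerivAt.congr_of_eventuallyEq H1 ?_) ?_
  · filter_upwards with r; unfold A1fun; simp only [Pi.mul_apply, Pi.neg_apply, Pi.add_apply, Pi.div_apply, Pi.pow_apply]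
  · unfold A2fun; simp only [Pi.mul_apply, Pi.neg_apply, Pi.add_apply, Pi.div_apply, Pi.pow_apply]; field_simp; ring

theorem hasDerivAt_G (H : ℝ) (h : ℝ → ℝ) (t : ℝ) (hu : deriv h t ≠ 0)
    (hd1 : HasDerivAt h (deriv h t) t)
    (hd2 : HasDerivAt (deriv h) (deriv (deriv h) t) t) :
    HasDerivAt (fun r => (H / (2 * deriv h r)) • ![-1 - h r ^ 2, 1 - h r ^ 2, 2 * h r])
      (G2fun H h t) t := by
  have hA := hasDerivAt_Afun H h t hu hd2
  have hsq : HasDerivAt (fun r => h r ^ 2) (2 * h t * deriv h t) t := by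
    simpa [Pi.pow_def] using hd1.pow 2
  apply hasDerivAt_pi.2
  intro i
  fin_cases i
  · have T := hA.mul ((hsq.neg).const_add (-1))
    refine HasDerivAt.congr_deriv (HasDerivAt.congr_of_eventuallyEq T ?_) ?_
    · filter_upwards with r
      simp only [Pi.mul_apply, Pi.neg_apply, Pi.add_apply, Pi.div_apply, Pi.pow_apply, Pi.smul_apply, smul_eq_mul, Fin.zero_eta, Fin.mk_one, Fin.reduceFinMk, Matrix.cons_val_zero, Matrix.cons_val_one, Matrix.head_cons, Matrix.cons_val_two, Matrix.tail_cons, Afun]; try ring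
    · simp only [Pi.mul_apply, Pi.neg_apply, Pi.add_apply, Pi.div_apply, Pi.pow_apply, G2fun, Fin.zero_eta, Fin.mk_one, Fin.reduceFinMk, Matrix.cons_val_zero, Matrix.cons_val_one, Matrix.head_cons, Matrix.cons_val_two, Matrix.tail_cons]; try ring
  · have T := hA.mul ((hsq.neg).const_add 1)
    refine HasDerivAt.congr_deriv (HasDerivAt.congr_of_eventuallyEq T ?_) ?_
    · filter_upwards with r
      simp only [Pi.mul_apply, Pi.neg_apply, Pi.add_apply, Pi.div_apply, Pi.pow_apply, Pi.smul_apply, smul_eq_mul, Fin.zero_eta, Fin.mk_one, Fin.reduceFinMk, Matrix.cons_val_zero, Matrix.cons_val_one, Matrix.head_cons, Matrix.cons_val_two, Matrix.tail_cons, Afun]; try ring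
    · simp only [Pi.mul_apply, Pi.neg_apply, Pi.add_apply, Pi.div_apply, Pi.pow_apply, G2fun, Fin.zero_eta, Fin.mk_one, Fin.reduceFinMk, Matrix.cons_val_zero, Matrix.cons_val_one, Matrix.head_cons, Matrix.cons_val_two, Matrix.tail_cons]; try ring
  · have T := hA.mul (hd1.const_mul 2)
    refine HasDerivAt.congr_deriv (HasDerivAt.congr_of_eventuallyEq T ?_) ?_
    · filter_upwards with r
      simp only [Pi.mul_apply, Pi.neg_apply, Pi.add_apply, Pi.div_apply, Pi.pow_apply, Pi.smul_apply, smul_eq_mul, Fin.zero_eta, Fin.mk_one, Fin.reduceFinMk, Matrix.cons_val_zero, Matrix.cons_val_one, Matrix.head_cons, Matrix.cons_val_two, Matrix.tail_cons, Afun]; try ring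
    · simp only [Pi.mul_apply, Pi.neg_apply, Pi.add_apply, Pi.div_apply, Pi.pow_apply, G2fun, Fin.zero_eta, Fin.mk_one, Fin.reduceFinMk, Matrix.cons_val_zero, Matrix.cons_val_one, Matrix.head_cons, Matrix.cons_val_two, Matrix.tail_cons]; try ring

theorem hasDerivAt_G2 (H : ℝ) (h : ℝ → ℝ) (t : ℝ) (hu : deriv h t ≠ 0)
    (hd1 : HasDerivAt h (deriv h t) t)
    (hd2 : HasDerivAt (deriv h) (deriv (deriv h) t) t)
    (hd3 : HasDerivAt (deriv (deriv h)) (deriv (deriv (deriv h)) t) t) :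
    HasDerivAt (G2fun H h) (G3fun H h t) t := by
  have hA := hasDerivAt_Afun H h t hu hd2
  have hA1 := hasDerivAt_A1fun H h t hu hd2 hd3
  have hsq : HasDerivAt (fun r => h r ^ 2) (2 * h t * deriv h t) t := by
    simpa [Pi.pow_def] using hd1.pow 2
  have hprod : HasDerivAt (fun r => -(2 * (h r * deriv h r)))
      (-(2 * (deriv h t * deriv h t + h t * deriv (deriv h) t))) t :=
    ((hd1.mul hd2).const_mul 2).neg
  apply hasDerivAt_pi.2
  intro i
  fin_cases i
  · have T := (hA1.mul ((hsq.neg).const_add (-1))).add (hA.mul hprod)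
    refine HasDerivAt.congr_deriv (HasDerivAt.congr_of_eventuallyEq T ?_) ?_
    · filter_upwards with r; simp only [Pi.mul_apply, Pi.neg_apply, Pi.add_apply, Pi.div_apply, Pi.pow_apply, G2fun, Fin.zero_eta, Fin.mk_one, Fin.reduceFinMk, Matrix.cons_val_zero, Matrix.cons_val_one, Matrix.head_cons, Matrix.cons_val_two, Matrix.tail_cons]; try ring
    · simp only [Pi.mul_apply, Pi.neg_apply, Pi.add_apply, Pi.div_apply, Pi.pow_apply, G3fun, Fin.zero_eta, Fin.mk_one, Fin.reduceFinMk, Matrix.cons_val_zero, Matrix.cons_val_one, Matrix.head_cons, Matrix.cons_val_two, Matrix.tail_cons]; try ring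
  · have T := (hA1.mul ((hsq.neg).const_add 1)).add (hA.mul hprod)
    refine HasDerivAt.congr_deriv (HasDerivAt.congr_of_eventuallyEq T ?_) ?_
    · filter_upwards with r
      simp only [Pi.mul_apply, Pi.neg_apply, Pi.add_apply, Pi.div_apply, Pi.pow_apply, G2fun, Fin.zero_eta, Fin.mk_one, Fin.reduceFinMk, Matrix.cons_val_zero, Matrix.cons_val_one, Matrix.head_cons, Matrix.cons_val_two, Matrix.tail_cons]; try ring
    · simp only [Pi.mul_apply, Pi.neg_apply, Pi.add_apply, Pi.div_apply, Pi.pow_apply, G3fun, Fin.zero_eta, Fin.mk_one, Fin.reduceFinMk, Matrix.cons_val_zero, Matrix.cons_val_one, Matrix.head_cons, Matrix.cons_val_two, Matrix.tail_cons]; try ring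
  · have T := (hA1.mul (hd1.const_mul 2)).add (hA.mul (hd2.const_mul 2))
    refine HasDerivAt.congr_deriv (HasDerivAt.congr_of_eventuallyEq T ?_) ?_
    · filter_upwards with r
      simp only [Pi.mul_apply, Pi.neg_apply, Pi.add_apply, Pi.div_apply, Pi.pow_apply, G2fun, Fin.zero_eta, Fin.mk_one, Fin.reduceFinMk, Matrix.cons_val_zero, Matrix.cons_val_one, Matrix.head_cons, Matrix.cons_val_two, Matrix.tail_cons]; try ring
    · simp only [Pi.mul_apply, Pi.neg_apply, Pi.add_apply, Pi.div_apply, Pi.pow_apply, G3fun, Fin.zero_eta, Fin.mk_one, Fin.reduceFinMk, Matrix.cons_val_zero, Matrix.cons_val_one, Matrix.head_cons, Matrix.cons_val_two, Matrix.tail_cons]; try ring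

set_option maxHeartbeats 2000000 in
/-- the lightlike curvature of the null curve generated by `h`
equals `S(h)/H`, where `S(h)` is the Schwarzian derivative of `h`. -/
theorem stmt18
    (I : Set ℝ) (hIopen : IsOpen I) (hIconn : I.OrdConnected)
    (H : ℝ) (hH : H ≠ 0)
    (h : ℝ → ℝ) (hhsm : ContDiffOn ℝ (⊤ : ℕ∞) h I)
    (hh' : ∀ s ∈ I, deriv h s ≠ 0)
    (γ : ℝ → Fin 3 → ℝ)
    (hγsm : ContDiffOn ℝ (⊤ : ℕ∞) γ I)
    (hγ' : ∀ s ∈ I, deriv γ s =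
      (H / (2 * deriv h s)) • ![-1 - h s ^ 2, 1 - h s ^ 2, 2 * h s])
    (n : ℝ → Fin 3 → ℝ)
    (hnsm : ContDiffOn ℝ (⊤ : ℕ∞) n I)
    (hnn : ∀ s ∈ I, ml (n s) (n s) = 0)
    (hnγ' : ∀ s ∈ I, ml (n s) (deriv γ s) = -1)
    (hnγ'' : ∀ s ∈ I, ml (n s) (deriv (deriv γ) s) = 0)
    (e : ℝ → Fin 3 → ℝ)
    (hedef : ∀ s, e s = (1 / H) • deriv (deriv γ) s)
    (κγ Sh : ℝ → ℝ)
    (hκdef : ∀ s, κγ s = ml (deriv e s) (n s))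
    (hShdef : ∀ s, Sh s = deriv (deriv (deriv h)) s / deriv h s
      - (3 / 2) * (deriv (deriv h) s / deriv h s) ^ 2) :
    ∀ s ∈ I, κγ s = Sh s / H := by
  intro s hs
  have hmem : I ∈ 𝓝 s := hIopen.mem_nhds hs
  have hcd1 : ContDiffOn ℝ (⊤ : ℕ∞) (deriv h) I := hhsm.deriv_of_isOpen hIopen (by simp)
  have hcd2 : ContDiffOn ℝ (⊤ : ℕ∞) (deriv (deriv h)) I := hcd1.deriv_of_isOpen hIopen (by simp)
  have hd1 : ∀ t ∈ I, HasDerivAt h (deriv h t) t := fun t ht =>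
    ((hhsm.differentiableOn (by simp)).differentiableAt (hIopen.mem_nhds ht)).hasDerivAt
  have hd2 : ∀ t ∈ I, HasDerivAt (deriv h) (deriv (deriv h) t) t := fun t ht =>
    ((hcd1.differentiableOn (by simp)).differentiableAt (hIopen.mem_nhds ht)).hasDerivAt
  have hd3 : ∀ t ∈ I, HasDerivAt (deriv (deriv h)) (deriv (deriv (deriv h)) t) t := fun t ht =>
    ((hcd2.differentiableOn (by simp)).differentiableAt (hIopen.mem_nhds ht)).hasDerivAt
  have hγ2 : ∀ t ∈ I, deriv (deriv γ) t = G2fun H h t := by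
    intro t ht
    have hev : deriv γ =ᶠ[𝓝 t]
        (fun r => (H / (2 * deriv h r)) • ![-1 - h r ^ 2, 1 - h r ^ 2, 2 * h r]) :=
      Filter.eventuallyEq_of_mem (hIopen.mem_nhds ht) (fun r hr => hγ' r hr)
    rw [hev.deriv_eq]
    exact (hasDerivAt_G H h t (hh' t ht) (hd1 t ht) (hd2 t ht)).deriv
  have hG2 : HasDerivAt (G2fun H h) (G3fun H h s) s :=
    hasDerivAt_G2 H h s (hh' s hs) (hd1 s hs) (hd2 s hs) (hd3 s hs)
  have he : deriv e s = (1/H) • G3fun H h s := by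
    have hev : e =ᶠ[𝓝 s] fun t => (1/H) • G2fun H h t :=
      Filter.eventuallyEq_of_mem hmem (fun t ht => by rw [hedef t, hγ2 t ht])
    rw [hev.deriv_eq]
    exact (hG2.const_smul (1/H)).deriv
  have hu := hh' s hs
  have F1 := hnγ' s hs
  rw [hγ' s hs] at F1
  have F2 := hnγ'' s hs
  rw [hγ2 s hs] at F2
  have F3 := hnn s hs
  have q1 : H*(n s 0*(1+h s^2) + n s 1*(1-h s^2) + 2*h s*(n s 2)) + 2*deriv h s = 0 := by
    simp only [ml, Pi.smul_apply, smul_eq_mul, Matrix.cons_val_zero, Matrix.cons_val_one,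
      Matrix.head_cons, Matrix.cons_val_two, Matrix.tail_cons] at F1
    field_simp at F1
    have q1' : (4*(deriv h s)^2) *
        (H*(n s 0*(1+h s^2) + n s 1*(1-h s^2) + 2*h s*(n s 2)) + 2*deriv h s) = 0 := by
      linear_combination (4*(deriv h s)^2) * F1
    exact (mul_eq_zero.mp q1').resolve_left (by positivity)
  have q2 : -(deriv (deriv h) s)*(n s 0*(1+h s^2) + n s 1*(1-h s^2) + 2*h s*(n s 2))
      + 2*(deriv h s)^2*(h s*(n s 0 - n s 1) + n s 2) = 0 := by
    simp only [ml, G2fun, Afun, A1fun, Matrix.cons_val_zero, Matrix.cons_val_one,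
      Matrix.head_cons, Matrix.cons_val_two, Matrix.tail_cons] at F2
    field_simp at F2
    have q2' : (16*H*(deriv h s)^6) *
        (-(deriv (deriv h) s)*(n s 0*(1+h s^2) + n s 1*(1-h s^2) + 2*h s*(n s 2))
          + 2*(deriv h s)^2*(h s*(n s 0 - n s 1) + n s 2)) = 0 := by
      linear_combination (16*(deriv h s)^6) * F2
    exact (mul_eq_zero.mp q2').resolve_left
      (mul_ne_zero (mul_ne_zero (by norm_num) hH) (pow_ne_zero _ hu))
  have q3 : -(n s 0)^2 + (n s 1)^2 + (n s 2)^2 = 0 := by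
    simp only [ml] at F3
    linear_combination F3
  have KEY := key_alg_s18 H (h s) (deriv h s) (deriv (deriv h) s) (deriv (deriv (deriv h)) s)
    (n s 0) (n s 1) (n s 2) hu q1 q2 q3
  have e0 : G3fun H h s 0 = ((2*H*(deriv (deriv h) s)^2 - H*(deriv h s)*(deriv (deriv (deriv h)) s))*(-1-h s^2)
      + 2*H*(h s)*(deriv (deriv h) s)*(deriv h s)^2 - 2*H*(deriv h s)^4) / (2*(deriv h s)^3) := by
    simp only [G3fun, Afun, A1fun, A2fun, Matrix.cons_val_zero]
    field_simp
    ring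
  have e1 : G3fun H h s 1 = ((2*H*(deriv (deriv h) s)^2 - H*(deriv h s)*(deriv (deriv (deriv h)) s))*(1-h s^2)
      + 2*H*(h s)*(deriv (deriv h) s)*(deriv h s)^2 - 2*H*(deriv h s)^4) / (2*(deriv h s)^3) := by
    simp only [G3fun, Afun, A1fun, A2fun, Matrix.cons_val_one, Matrix.head_cons, Matrix.cons_val_zero]
    field_simp
    ring
  have e2 : G3fun H h s 2 = ((2*H*(deriv (deriv h) s)^2 - H*(deriv h s)*(deriv (deriv (deriv h)) s))*(2*h s)
      - 2*H*(deriv (deriv h) s)*(deriv h s)^2) / (2*(deriv h s)^3) := by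
    simp only [G3fun, Afun, A1fun, A2fun, Matrix.cons_val_two, Matrix.tail_cons, Matrix.head_cons]
    field_simp
    ring
  have hval : -(G3fun H h s 0 * n s 0) + G3fun H h s 1 * n s 1 + G3fun H h s 2 * n s 2
      = (2*(deriv h s)^2*(deriv (deriv (deriv h)) s) - 3*(deriv h s)*(deriv (deriv h) s)^2)
        / (2*(deriv h s)^3) := by
    rw [e0, e1, e2]
    field_simp
    linear_combination KEY
  rw [hκdef, hShdef, he]
  have hre : ml ((1/H) • G3fun H h s) (n s)
      = (1/H) * (-(G3fun H h s 0 * n s 0) + G3fun H h s 1 * n s 1 + G3fun H h s 2 * n s 2) := by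
    simp only [ml, Pi.smul_apply, smul_eq_mul]
    ring
  rw [hre, hval]
  field_simp
end
end
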